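/- arXiv:1010.3756 — 3 statements merged into one kernel-verified Lean document; each statement's English description precedes it below -/
import Mathlib

section
/- Consider the tamed Euler recursion Y_{n+1} = Y_n + (T/N)μ(Y_n)/(1 + (T/N)‖μ(Y_n)‖) + σ(Y_n)ΔW_n in ℝᵈ, where μ is one-sided Lipschitz with constant c, has polynomially growing derivative, and σ is c-Lipschitz. Set λ := (1 + 2c + T + ‖μ(0)‖ + ‖σ(0)‖)⁴. Then on the event where 1 ≤ ‖Y_n‖ ≤ N^{1/(2c)}, one has the pathwise estimate ‖Y_{n+1}‖² ≤ ‖Y_n‖² · exp( 2λ/N + 2λ‖ΔW_n‖² + 2·1_{‖Y_n‖≥1}⟨Y_n/‖Y_n‖, (σ(Y_n)/‖Y_n‖)ΔW_n⟩ ). -/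
set_option maxHeartbeats 1000000

theorem tamed_aux1 (T c A B : ℝ) (hT : 0 < T) (hc : 0 < c) (hA : 0 ≤ A) (hB : 0 ≤ B) :
    T * (c + A) + T^2 * (2*c + A)^2 ≤ (1+2*c+T+A+B)^4 := by
  have hS1 : (1:ℝ) ≤ 1+2*c+T+A+B := by linarith
  have hS24 : (1+2*c+T+A+B)^2 ≤ (1+2*c+T+A+B)^4 :=
    pow_le_pow_right₀ hS1 (by norm_num)
  have h4uv : 4*(T*(2*c+A)) ≤ (1+2*c+T+A+B)^2 := by
    nlinarith [sq_nonneg (T-(2*c+A)), mul_nonneg hT.le hB, mul_nonneg hc.le hB, mul_nonneg hA hB]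
  have huv0 : (0:ℝ) ≤ 4*(T*(2*c+A)) := by
    have := mul_nonneg hT.le (show (0:ℝ) ≤ 2*c+A by linarith)
    linarith
  have hsq : (4*(T*(2*c+A)))^2 ≤ ((1+2*c+T+A+B)^2)^2 := pow_le_pow_left₀ huv0 h4uv 2
  have e1 : (4*(T*(2*c+A)))^2 = 16*(T^2*(2*c+A)^2) := by ring
  have e2 : ((1+2*c+T+A+B)^2)^2 = (1+2*c+T+A+B)^4 := by ring
  have hca : T*(c+A) ≤ T*(2*c+A) := by
    have h := mul_nonneg hT.le hc.le
    have e : T*(2*c+A) - T*(c+A) = T*c := by ring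
    linarith
  linarith [hsq, e1, e2, hca, h4uv, hS24, mul_nonneg (sq_nonneg T) (sq_nonneg (2*c+A))]

theorem tamed_aux2 (T c A B : ℝ) (hT : 0 < T) (hc : 0 < c) (hA : 0 ≤ A) (hB : 0 ≤ B) :
    (c + B)^2 ≤ (1+2*c+T+A+B)^4 := by
  have hS1 : (1:ℝ) ≤ 1+2*c+T+A+B := by linarith
  have hS24 : (1+2*c+T+A+B)^2 ≤ (1+2*c+T+A+B)^4 :=
    pow_le_pow_right₀ hS1 (by norm_num)
  have h1 : (c+B)^2 ≤ (1+2*c+T+A+B)^2 :=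
    pow_le_pow_left₀ (by linarith) (by linarith) 2
  linarith

theorem tamed_euler_pathwise_growth
    (d m : ℕ) (T c : ℝ) (hT : 0 < T) (hc : 0 < c) (N : ℕ) (hN : 0 < N)
    (μ : EuclideanSpace ℝ (Fin d) → EuclideanSpace ℝ (Fin d))
    (hC1 : ContDiff ℝ 1 μ)
    (hμ' : ∀ x, ‖fderiv ℝ μ x‖ ≤ c * (1 + ‖x‖ ^ c))
    (hμos : ∀ x y, (inner ℝ (x - y) (μ x - μ y) : ℝ) ≤ c * ‖x - y‖^2)
    (σ : EuclideanSpace ℝ (Fin d) → (EuclideanSpace ℝ (Fin m) →L[ℝ] EuclideanSpace ℝ (Fin d)))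
    (hσ : ∀ x y, ‖σ x - σ y‖ ≤ c * ‖x - y‖)
    (lam : ℝ) (hlam : lam = (1 + 2*c + T + ‖μ 0‖ + ‖σ 0‖)^4)
    (Y Ynext : EuclideanSpace ℝ (Fin d)) (ΔW : EuclideanSpace ℝ (Fin m))
    (hrec : Ynext = Y + ((T / N) / (1 + (T / N) * ‖μ Y‖)) • μ Y + σ Y ΔW)
    (hY1 : 1 ≤ ‖Y‖) (hYN : ‖Y‖ ≤ (N : ℝ) ^ (1 / (2 * c))) :
    ‖Ynext‖^2 ≤ ‖Y‖^2 * Real.exp (2 * lam / N + 2 * lam * ‖ΔW‖^2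
      + 2 * (if 1 ≤ ‖Y‖ then (inner ℝ (‖Y‖⁻¹ • Y) (‖Y‖⁻¹ • (σ Y ΔW)) : ℝ) else 0)) := by
  have hKpos : (0:ℝ) < ‖Y‖ := lt_of_lt_of_le one_pos hY1
  set K := ‖Y‖ with hKdef
  set A := ‖μ 0‖ with hAdef
  set B := ‖σ 0‖ with hBdef
  have hA : 0 ≤ A := norm_nonneg _
  have hB : 0 ≤ B := norm_nonneg _
  have hNpos : (0:ℝ) < (N:ℝ) := by exact_mod_cast hN
  have hh : 0 < T / (N:ℝ) := div_pos hT hNpos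
  set τ := (T / (N:ℝ)) / (1 + (T / (N:ℝ)) * ‖μ Y‖) with hτdef
  have hden : (1:ℝ) ≤ 1 + (T / (N:ℝ)) * ‖μ Y‖ :=
    le_add_of_nonneg_right (mul_nonneg hh.le (norm_nonneg _))
  have hτpos : 0 < τ := div_pos hh (lt_of_lt_of_le one_pos hden)
  have hτh : τ ≤ T / (N:ℝ) := div_le_self hh.le hden
  -- rpow facts
  have hKc0 : 0 ≤ K ^ c := Real.rpow_nonneg (norm_nonneg Y) c
  have hKc1 : 1 ≤ K ^ c := by
    calc (1:ℝ) = 1 ^ c := (Real.one_rpow c).symm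
    _ ≤ K ^ c := Real.rpow_le_rpow zero_le_one hY1 hc.le
  have hKcN : (K ^ c)^2 ≤ (N:ℝ) := by
    have h1 : K ^ c ≤ ((N:ℝ) ^ (1/(2*c))) ^ c := Real.rpow_le_rpow (norm_nonneg Y) hYN hc.le
    have h2 : ((N:ℝ) ^ (1/(2*c))) ^ c = (N:ℝ) ^ ((1:ℝ)/2) := by
      rw [← Real.rpow_mul (Nat.cast_nonneg N)]
      congr 1
      field_simp
    have h3 : ((N:ℝ) ^ ((1:ℝ)/2))^2 = (N:ℝ) := by
      rw [← Real.rpow_natCast ((N:ℝ)^((1:ℝ)/2)) 2, ← Real.rpow_mul (Nat.cast_nonneg N)]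
      norm_num
    calc (K^c)^2 ≤ ((N:ℝ) ^ ((1:ℝ)/2))^2 := by
          apply pow_le_pow_left₀ hKc0 (h1.trans_eq h2)
    _ = (N:ℝ) := h3
  -- bound on μ Y via MVT
  have hdiff : Differentiable ℝ μ := hC1.differentiable one_ne_zero
  have hmvt : ‖μ Y - μ 0‖ ≤ (c*(1+K^c)) * ‖Y - 0‖ := by
    apply Convex.norm_image_sub_le_of_norm_fderiv_le
      (fun x _ => hdiff x) ?_ (convex_closedBall (0:EuclideanSpace ℝ (Fin d)) K)
      (Metric.mem_closedBall_self hKpos.le) ?_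
    · intro x hx
      refine (hμ' x).trans ?_
      have hxK : ‖x‖ ≤ K := by
        simpa [dist_eq_norm] using Metric.mem_closedBall.mp hx
      have h1 : ‖x‖ ^ c ≤ K ^ c := Real.rpow_le_rpow (norm_nonneg x) hxK hc.le
      have h2 : (1 + ‖x‖ ^ c) ≤ (1 + K ^ c) := by linarith
      exact mul_le_mul_of_nonneg_left h2 hc.le
    · simp [Metric.mem_closedBall, dist_eq_norm, hKdef]
  have hμY : ‖μ Y‖ ≤ (2*c + A) * (K ^ c * K) := by
    have h1 : ‖μ Y‖ ≤ ‖μ Y - μ 0‖ + A := by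
      have := norm_sub_norm_le (μ Y) (μ 0)
      linarith
    have h2 : ‖Y - 0‖ = K := by simp [hKdef]
    rw [h2] at hmvt
    have hKK : K ≤ K^c * K := le_mul_of_one_le_left hKpos.le hKc1
    have t1 : c*K ≤ c*(K^c*K) := mul_le_mul_of_nonneg_left hKK hc.le
    have hKK1 : (1:ℝ) ≤ K^c*K := hKc1.trans (le_mul_of_one_le_right hKc0 hY1)
    have t2 : A ≤ A*(K^c*K) := le_mul_of_one_le_right hA hKK1
    calc ‖μ Y‖ ≤ (c*(1+K^c))*K + A := by linarith
    _ = c*K + c*(K^c*K) + A := by ring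
    _ ≤ c*(K^c*K) + c*(K^c*K) + A*(K^c*K) := by linarith
    _ = (2*c + A) * (K ^ c * K) := by ring
  -- inner product bound
  have hIμ : (inner ℝ Y (μ Y) : ℝ) ≤ (c + A) * K^2 := by
    have e1 : (inner ℝ (Y - 0) (μ Y - μ 0) : ℝ) = inner ℝ Y (μ Y) - inner ℝ Y (μ 0) := by
      simp [inner_sub_right]
    have h1 := hμos Y 0
    rw [e1] at h1
    have h2 : (inner ℝ Y (μ 0) : ℝ) ≤ K * A := real_inner_le_norm Y (μ 0)
    have h3 : ‖Y - (0:EuclideanSpace ℝ (Fin d))‖ = K := by simp [hKdef]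
    rw [h3] at h1
    have p : (0:ℝ) ≤ A*K*(K-1) :=
      mul_nonneg (mul_nonneg hA hKpos.le) (sub_nonneg.mpr hY1)
    have e2 : A*K*(K-1) = A*K^2 - K*A := by ring
    have e3 : (c+A)*K^2 = c*K^2 + A*K^2 := by ring
    linarith
  -- σ bound
  have hσY : ‖σ Y ΔW‖ ≤ (c + B) * (K * ‖ΔW‖) := by
    have h1 : ‖σ Y‖ ≤ c * K + B := by
      have h2 := norm_sub_norm_le (σ Y) (σ 0)
      have h3 := hσ Y 0
      simp only [sub_zero] at h3
      linarith
    have h4 : ‖σ Y ΔW‖ ≤ ‖σ Y‖ * ‖ΔW‖ := (σ Y).le_opNorm ΔW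
    have h5 : ‖σ Y‖ * ‖ΔW‖ ≤ (c*K + B) * ‖ΔW‖ :=
      mul_le_mul_of_nonneg_right h1 (norm_nonneg ΔW)
    have p : (0:ℝ) ≤ B*‖ΔW‖*(K-1) :=
      mul_nonneg (mul_nonneg hB (norm_nonneg ΔW)) (sub_nonneg.mpr hY1)
    have e1 : (c*K + B) * ‖ΔW‖ = c*(K*‖ΔW‖) + B*‖ΔW‖ := by ring
    have e2 : (c+B)*(K*‖ΔW‖) = c*(K*‖ΔW‖) + B*(K*‖ΔW‖) := by ring
    have e3 : B*‖ΔW‖*(K-1) = B*(K*‖ΔW‖) - B*‖ΔW‖ := by ring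
    linarith
  -- lambda bounds
  have hlam1 : T * (c + A) + T^2 * (2*c + A)^2 ≤ lam := by
    rw [hlam]; exact tamed_aux1 T c A B hT hc hA hB
  have hlam2 : (c + B)^2 ≤ lam := by
    rw [hlam]; exact tamed_aux2 T c A B hT hc hA hB
  -- expansion of the squared norm
  clear_value K A B τ
  have hv : Ynext = Y + (τ • μ Y + σ Y ΔW) := by rw [hrec, add_assoc]
  set I : ℝ := inner ℝ Y (μ Y) with hIdef
  set J : ℝ := inner ℝ Y (σ Y ΔW) with hJdef
  have hexpand : ‖Ynext‖^2 = K^2 + 2*(τ * I + J) + ‖τ • μ Y + σ Y ΔW‖^2 := by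
    rw [hv, norm_add_sq_real, inner_add_right, real_inner_smul_right, hKdef, hIdef, hJdef]
  clear_value I J
  -- quadratic remainder bound
  have hQ : ‖τ • μ Y + σ Y ΔW‖^2 ≤ 2*(τ*‖μ Y‖)^2 + 2*‖σ Y ΔW‖^2 := by
    have h1 : ‖τ • μ Y + σ Y ΔW‖ ≤ τ*‖μ Y‖ + ‖σ Y ΔW‖ := by
      calc ‖τ • μ Y + σ Y ΔW‖ ≤ ‖τ • μ Y‖ + ‖σ Y ΔW‖ := norm_add_le _ _
      _ = τ*‖μ Y‖ + ‖σ Y ΔW‖ := by rw [norm_smul, Real.norm_eq_abs, abs_of_pos hτpos]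
    have h2 : ‖τ • μ Y + σ Y ΔW‖^2 ≤ (τ*‖μ Y‖ + ‖σ Y ΔW‖)^2 :=
      pow_le_pow_left₀ (norm_nonneg _) h1 2
    have e : (τ*‖μ Y‖ + ‖σ Y ΔW‖)^2 + (τ*‖μ Y‖ - ‖σ Y ΔW‖)^2
        = 2*(τ*‖μ Y‖)^2 + 2*‖σ Y ΔW‖^2 := by ring
    linarith [h2, sq_nonneg (τ*‖μ Y‖ - ‖σ Y ΔW‖), e]
  -- piecewise bounds
  have m1 : τ * I ≤ (T/(N:ℝ)) * ((c+A)*K^2) := by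
    have h1 : τ * I ≤ τ * ((c+A)*K^2) := mul_le_mul_of_nonneg_left hIμ hτpos.le
    have h2 : τ * ((c+A)*K^2) ≤ (T/(N:ℝ)) * ((c+A)*K^2) := by
      apply mul_le_mul_of_nonneg_right hτh
      positivity
    linarith
  have m2 : (τ*‖μ Y‖)^2 ≤ (T^2/(N:ℝ)) * ((2*c+A)^2*K^2) := by
    have h1 : τ*‖μ Y‖ ≤ (T/(N:ℝ)) * ((2*c + A) * (K ^ c * K)) := by
      calc τ*‖μ Y‖ ≤ τ * ((2*c + A) * (K ^ c * K)) := mul_le_mul_of_nonneg_left hμY hτpos.le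
      _ ≤ (T/(N:ℝ)) * ((2*c + A) * (K ^ c * K)) := by
          apply mul_le_mul_of_nonneg_right hτh
          have h0 : (0:ℝ) ≤ 2*c + A := by linarith
          positivity
    have h2 : (τ*‖μ Y‖)^2 ≤ (T/(N:ℝ))^2 * ((2*c + A)^2 * ((K ^ c)^2 * K^2)) := by
      have h2a := pow_le_pow_left₀ (mul_nonneg hτpos.le (norm_nonneg (μ Y))) h1 2
      calc (τ*‖μ Y‖)^2 ≤ ((T/(N:ℝ)) * ((2*c + A) * (K ^ c * K)))^2 := h2a
      _ = (T/(N:ℝ))^2 * ((2*c + A)^2 * ((K ^ c)^2 * K^2)) := by ring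
    have h3 : (T/(N:ℝ))^2 * ((2*c + A)^2 * ((K ^ c)^2 * K^2)) ≤
        (T/(N:ℝ))^2 * ((2*c + A)^2 * ((N:ℝ) * K^2)) := by
      have h3a : (K ^ c)^2 * K^2 ≤ (N:ℝ) * K^2 :=
        mul_le_mul_of_nonneg_right hKcN (sq_nonneg K)
      exact mul_le_mul_of_nonneg_left
        (mul_le_mul_of_nonneg_left h3a (sq_nonneg (2*c+A))) (sq_nonneg (T/(N:ℝ)))
    have h5 : (T/(N:ℝ))^2 * ((2*c + A)^2 * ((N:ℝ) * K^2)) = (T^2/(N:ℝ)) * ((2*c+A)^2*K^2) := by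
      field_simp
    linarith
  have m3 : ‖σ Y ΔW‖^2 ≤ (c+B)^2 * (K^2 * ‖ΔW‖^2) := by
    have h0 := pow_le_pow_left₀ (norm_nonneg (σ Y ΔW)) hσY 2
    calc ‖σ Y ΔW‖^2 ≤ ((c + B) * (K * ‖ΔW‖))^2 := h0
    _ = (c+B)^2 * (K^2 * ‖ΔW‖^2) := by ring
  -- combine
  rw [if_pos hY1]
  have hinner : (inner ℝ (K⁻¹ • Y) (K⁻¹ • (σ Y ΔW)) : ℝ) = K⁻¹ * (K⁻¹ * J) := by
    rw [real_inner_smul_left, real_inner_smul_right, hJdef]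
  rw [hinner]
  set E : ℝ := 2 * lam / ↑N + 2 * lam * ‖ΔW‖ ^ 2 + 2 * (K⁻¹ * (K⁻¹ * J)) with hEdef
  have key : ‖Ynext‖^2 ≤ K^2 * (1 + E) := by
    have e1 : K^2 * (1 + E) = K^2 + 2*lam*K^2/(N:ℝ) + 2*lam*(K^2*‖ΔW‖^2) + 2*J := by
      rw [hEdef]
      field_simp
      ring
    rw [hexpand, e1]
    have m5 : 2*((T/(N:ℝ)) * ((c+A)*K^2)) + 2*((T^2/(N:ℝ)) * ((2*c+A)^2*K^2))
        ≤ 2*lam*K^2/(N:ℝ) := by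
      have h1 : 2*((T/(N:ℝ)) * ((c+A)*K^2)) + 2*((T^2/(N:ℝ)) * ((2*c+A)^2*K^2))
          = (2*K^2/(N:ℝ)) * (T * (c + A) + T^2 * (2*c + A)^2) := by
        field_simp
      have h2 : (2*K^2/(N:ℝ)) * (T * (c + A) + T^2 * (2*c + A)^2) ≤ (2*K^2/(N:ℝ)) * lam :=
        mul_le_mul_of_nonneg_left hlam1 (by positivity)
      have h3 : (2*K^2/(N:ℝ)) * lam = 2*lam*K^2/(N:ℝ) := by ring
      linarith
    have m6 : 2*((c+B)^2 * (K^2*‖ΔW‖^2)) ≤ 2*lam*(K^2*‖ΔW‖^2) := by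
      have h0 : (c+B)^2 * (K^2*‖ΔW‖^2) ≤ lam * (K^2*‖ΔW‖^2) :=
        mul_le_mul_of_nonneg_right hlam2 (by positivity)
      linarith
    linarith [m1, m2, m3, hQ, m5, m6]
  have hfin : K^2 * (1 + E) ≤ K^2 * Real.exp E :=
    mul_le_mul_of_nonneg_left (by linarith [Real.add_one_le_exp E]) (sq_nonneg K)
  linarith
end

section
/- Dominator lemma: let Y_n^N be the tamed Euler scheme started at ξ, let α_n^N := 1_{‖Y_n^N‖≥1}⟨Y_n^N/‖Y_n^N‖, (σ(Y_n^N)/‖Y_n^N‖)ΔW_n^N⟩, let D_n^N := (λ + ‖ξ‖)·exp(λ + sup_{u∈{0,…,n}} ∑_{k=u}^{n-1}[λ‖ΔW_k^N‖² + α_k^N]), and let Ω_n^N be the event that D_k^N ≤ N^{1/(2c)} and ‖ΔW_k^N‖ ≤ 1 for all k ∈ {0,…,n-1}. Then pathwise 1_{Ω_n^N}‖Y_n^N‖ ≤ D_n^N for all n ∈ {0,1,…,N} and all N ∈ ℕ. -/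
open Finset

set_option maxHeartbeats 2000000

private lemma aux_norm_add_sq {E : Type*} [SeminormedAddCommGroup E] (v w : E) :
    ‖v + w‖^2 ≤ 2*‖v‖^2 + 2*‖w‖^2 := by
  nlinarith [norm_add_le v w, norm_nonneg v, norm_nonneg w, norm_nonneg (v+w),
    sq_nonneg (‖v‖ - ‖w‖)]

private lemma aux_sq_le {a b : ℝ} (ha : 0 ≤ a) (hb : 0 ≤ b) (h : a^2 ≤ b^2) : a ≤ b := by
  nlinarith

private lemma aux_le_sq {r : ℝ} (h : 1 ≤ r) : r ≤ r^2 := by nlinarith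

private lemma aux_mu_growth {M0 C X r z : ℝ} (hC : 0 ≤ C) (hM0 : 0 ≤ M0) (hX : 1 ≤ X)
    (hr : 1 ≤ r) (hz : z ≤ M0 + C*(1+X)*r) : z ≤ (M0 + 2*C)*(X*r) := by
  nlinarith [mul_nonneg (mul_nonneg hC (sub_nonneg.mpr hX)) (by linarith : (0:ℝ) ≤ r),
    mul_nonneg hM0 (by nlinarith : (0:ℝ) ≤ X*r - 1)]

private lemma aux_inner_mu {C M0 I r : ℝ} (hM0 : 0 ≤ M0) (hr : 1 ≤ r)
    (h : I ≤ C*r^2 + r*M0) : I ≤ (C + M0)*r^2 := by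
  nlinarith [mul_nonneg hM0 (by nlinarith : (0:ℝ) ≤ r^2 - r)]

private lemma aux_w_sq {S C r e lam wn : ℝ} (hC : 0 ≤ C) (hS : 0 ≤ S) (hr : 1 ≤ r)
    (he : 0 ≤ e) (hwn : 0 ≤ wn) (hlam : (C + S)^2 ≤ lam) (h : wn ≤ (S + C*r)*e) :
    wn^2 ≤ lam*(r^2*e^2) := by
  have h1 : wn ≤ ((C + S)*r)*e := by
    nlinarith [mul_nonneg (mul_nonneg he hS) (sub_nonneg.mpr hr)]
  have h2 : wn^2 ≤ (((C + S)*r)*e)^2 := by nlinarith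
  nlinarith [sq_nonneg (r*e), h2]

/-- Dominator lemma: pathwise domination of the tamed Euler scheme by the
dominating process `D` on the event `Ω_n^N`. -/
theorem tamed_euler_dominator
    {Ω : Type*} (d m : ℕ) (T c : ℝ) (hT : 0 < T) (hc : 0 < c)
    (N : ℕ) (hN : 0 < N)
    (μ : EuclideanSpace ℝ (Fin d) → EuclideanSpace ℝ (Fin d))
    (hC1 : ContDiff ℝ 1 μ)
    (hμ' : ∀ x, ‖fderiv ℝ μ x‖ ≤ c * (1 + ‖x‖ ^ c))
    (hμos : ∀ x y, (inner ℝ (x - y) (μ x - μ y) : ℝ) ≤ c * ‖x - y‖^2)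
    (σ : EuclideanSpace ℝ (Fin d) → (EuclideanSpace ℝ (Fin m) →L[ℝ] EuclideanSpace ℝ (Fin d)))
    (hσ : ∀ x y, ‖σ x - σ y‖ ≤ c * ‖x - y‖)
    (lam : ℝ) (hlam : lam = (1 + 2*c + T + ‖μ 0‖ + ‖σ 0‖)^4)
    (ξ : Ω → EuclideanSpace ℝ (Fin d))
    (ΔW : ℕ → Ω → EuclideanSpace ℝ (Fin m))
    (Y : ℕ → Ω → EuclideanSpace ℝ (Fin d))
    (hY0 : ∀ ω, Y 0 ω = ξ ω)
    (hYrec : ∀ n ω, Y (n+1) ω = Y n ω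
      + ((T / N) / (1 + (T / N) * ‖μ (Y n ω)‖)) • μ (Y n ω) + σ (Y n ω) (ΔW n ω))
    (α : ℕ → Ω → ℝ)
    (hα : ∀ n ω, α n ω = if 1 ≤ ‖Y n ω‖ then
      (inner ℝ (‖Y n ω‖⁻¹ • Y n ω) (‖Y n ω‖⁻¹ • (σ (Y n ω) (ΔW n ω))) : ℝ) else 0)
    (D : ℕ → Ω → ℝ)
    (hD : ∀ n ω, D n ω = (lam + ‖ξ ω‖) * Real.exp (lam +
      (Finset.range (n+1)).sup' Finset.nonempty_range_add_one
        (fun u => ∑ k ∈ Finset.Ico u n, (lam * ‖ΔW k ω‖^2 + α k ω)))) :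
    ∀ n ≤ N, ∀ ω : Ω,
      (∀ k < n, D k ω ≤ (N : ℝ) ^ (1 / (2 * c)) ∧ ‖ΔW k ω‖ ≤ 1) →
      ‖Y n ω‖ ≤ D n ω := by
  have hc0 : (0:ℝ) ≤ c := hc.le
  have hT0 : (0:ℝ) ≤ T := hT.le
  have hN' : (0:ℝ) < N := by exact_mod_cast hN
  have hNe : (N:ℝ) ≠ 0 := hN'.ne'
  have hμ00 : (0:ℝ) ≤ ‖μ (0 : EuclideanSpace ℝ (Fin d))‖ := norm_nonneg _
  have hσ00 : (0:ℝ) ≤ ‖σ (0 : EuclideanSpace ℝ (Fin d))‖ := norm_nonneg _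
  -- abbreviations
  set K : ℝ := 2*T*(c + ‖μ 0‖) + 2*T^2*(‖μ 0‖ + 2*c)^2 with hK
  set L : ℝ := Real.log (2 + c + ‖σ 0‖) with hLdef
  set F : ℕ → Ω → ℝ := fun n ω => (Finset.range (n+1)).sup' Finset.nonempty_range_add_one
        (fun u => ∑ k ∈ Finset.Ico u n, (lam * ‖ΔW k ω‖^2 + α k ω)) with hF
  have hDF : ∀ n ω, D n ω = (lam + ‖ξ ω‖) * Real.exp (lam + F n ω) := by
    intro n ω; simp only [hF]; exact hD n ω
  -- basic constants
  set a : ℝ := 1 + 2*c + T + ‖μ 0‖ + ‖σ 0‖ with ha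
  have ha1 : 1 ≤ a := by rw [ha]; linarith
  have hlam1 : 1 ≤ lam := by
    rw [hlam]; nlinarith [sq_nonneg a, sq_nonneg (a-1), sq_nonneg (a+1)]
  have hlam0 : (0:ℝ) ≤ lam := by linarith
  have hK0 : 0 ≤ K := by
    rw [hK]
    have h1 : 0 ≤ 2*T*(c + ‖μ 0‖) := by positivity
    have h2 : 0 ≤ 2*T^2*(‖μ 0‖ + 2*c)^2 := by positivity
    linarith
  have hL0 : 0 ≤ L := by
    rw [hLdef]; apply Real.log_nonneg; linarith
  have hexpL : Real.exp L = 2 + c + ‖σ 0‖ := by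
    rw [hLdef]; exact Real.exp_log (by linarith)
  -- Claim A : L + K/2 ≤ lam
  have hLK : L + K/2 ≤ lam := by
    set u : ℝ := T + (‖μ 0‖ + 2*c) + ‖σ 0‖ with hu
    have hu0 : 0 ≤ u := by rw [hu]; linarith
    have hau : a = 1 + u := by rw [ha, hu]; ring
    have hTq : T*(‖μ 0‖ + 2*c) ≤ u^2/4 := by
      nlinarith [sq_nonneg (T - (‖μ 0‖ + 2*c)), sq_nonneg (T + (‖μ 0‖ + 2*c)), hσ00,
        mul_nonneg (add_nonneg hT0 (by linarith : (0:ℝ) ≤ ‖μ 0‖ + 2*c)) hσ00]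
    have hTq2 : T^2*(‖μ 0‖ + 2*c)^2 ≤ u^4/16 := by
      have h0 : 0 ≤ T*(‖μ 0‖ + 2*c) := by positivity
      nlinarith [hTq, h0, sq_nonneg u]
    have hKu : K/2 ≤ u^2/4 + u^4/16 := by
      rw [hK]
      have : T*(c + ‖μ 0‖) ≤ T*(‖μ 0‖ + 2*c) := by nlinarith
      nlinarith [hTq, hTq2]
    have hLu : L ≤ 1 + u/2 := by
      have h1 : (2:ℝ) + c + ‖σ 0‖ ≤ 2 + u := by rw [hu]; linarith
      have h2 : L ≤ Real.log (2 + u) := by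
        rw [hLdef]; exact Real.log_le_log (by linarith) h1
      have h3 : Real.log (2 + u) = Real.log 2 + Real.log (1 + u/2) := by
        rw [← Real.log_mul (by norm_num) (by linarith)]; ring_nf
      have h4 : Real.log (1 + u/2) ≤ u/2 := by
        have := Real.log_le_sub_one_of_pos (show (0:ℝ) < 1 + u/2 by linarith)
        linarith
      have h5 : Real.log 2 ≤ 1 := by
        have := Real.log_le_sub_one_of_pos (show (0:ℝ) < 2 by norm_num)
        linarith
      linarith
    have hlamu : lam = (1+u)^4 := by rw [hlam, hau]
    have hexp : (1+u)^4 = 1 + 4*u + 6*u^2 + 4*u^3 + u^4 := by ring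
    rw [hlamu, hexp]
    nlinarith [hu0, mul_nonneg hu0 hu0, mul_nonneg (mul_nonneg hu0 hu0) hu0,
      mul_nonneg (mul_nonneg (mul_nonneg hu0 hu0) hu0) hu0, hKu, hLu]
  -- sigma growth
  have hσn : ∀ x : EuclideanSpace ℝ (Fin d), ‖σ x‖ ≤ ‖σ 0‖ + c*‖x‖ := by
    intro x
    have h1 := norm_sub_norm_le (σ x) (σ 0)
    have h2 := hσ x 0
    rw [sub_zero] at h2
    linarith
  have hsig2 : (c + ‖σ 0‖)^2 ≤ lam := by
    have hca : c + ‖σ 0‖ ≤ a := by rw [ha]; linarith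
    have h1 : (c + ‖σ 0‖)^2 ≤ a^2 := by nlinarith [add_nonneg hc0 hσ00]
    have h2 : a^2 ≤ a^4 := by nlinarith [sq_nonneg a, sq_nonneg (a^2 - 1)]
    rw [hlam]; linarith
  -- mu growth via mean value inequality
  have hμn : ∀ x : EuclideanSpace ℝ (Fin d), ‖μ x‖ ≤ ‖μ 0‖ + c*(1+‖x‖^c)*‖x‖ := by
    intro x
    have hdiff : ∀ y ∈ Metric.closedBall (0 : EuclideanSpace ℝ (Fin d)) ‖x‖,
        DifferentiableAt ℝ μ y := fun y _ => (hC1.differentiable one_ne_zero).differentiableAt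
    have hbnd : ∀ y ∈ Metric.closedBall (0 : EuclideanSpace ℝ (Fin d)) ‖x‖,
        ‖fderiv ℝ μ y‖ ≤ c*(1+‖x‖^c) := by
      intro y hy
      have hy' : ‖y‖ ≤ ‖x‖ := by
        simpa [Metric.mem_closedBall, dist_zero_right] using hy
      refine (hμ' y).trans ?_
      have : ‖y‖^c ≤ ‖x‖^c := Real.rpow_le_rpow (norm_nonneg y) hy' hc0
      nlinarith
    have hmem0 : (0 : EuclideanSpace ℝ (Fin d)) ∈ Metric.closedBall (0 : EuclideanSpace ℝ (Fin d)) ‖x‖ :=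
      Metric.mem_closedBall_self (norm_nonneg x)
    have hmemx : x ∈ Metric.closedBall (0 : EuclideanSpace ℝ (Fin d)) ‖x‖ := by
      simp [Metric.mem_closedBall, dist_zero_right]
    have hmv := (convex_closedBall (0 : EuclideanSpace ℝ (Fin d)) ‖x‖).norm_image_sub_le_of_norm_fderiv_le
      hdiff hbnd hmem0 hmemx
    rw [sub_zero] at hmv
    have h1 := norm_sub_norm_le (μ x) (μ 0)
    linarith
  -- one-sided inner bound
  have hμi : ∀ x : EuclideanSpace ℝ (Fin d), (inner ℝ x (μ x) : ℝ) ≤ c*‖x‖^2 + ‖x‖*‖μ 0‖ := by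
    intro x
    have h1 := hμos x 0
    rw [sub_zero] at h1
    have h2 : (inner ℝ x (μ x) : ℝ) = inner ℝ x (μ x - μ 0) + inner ℝ x (μ 0) := by
      rw [inner_sub_right]; ring
    have h3 : (inner ℝ x (μ 0) : ℝ) ≤ ‖x‖*‖μ 0‖ := real_inner_le_norm x (μ 0)
    linarith
  -- properties of F
  have hFnn : ∀ n ω, 0 ≤ F n ω := by
    intro n ω
    simp only [hF]
    have h := Finset.le_sup' (fun u => ∑ k ∈ Finset.Ico u n, (lam * ‖ΔW k ω‖^2 + α k ω))
      (Finset.self_mem_range_succ n)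
    simp only [Finset.Ico_self, Finset.sum_empty] at h
    exact h
  have hFstep : ∀ n ω, F n ω + (lam * ‖ΔW n ω‖^2 + α n ω) ≤ F (n+1) ω := by
    intro n ω
    have h2 : F n ω ≤ F (n+1) ω - (lam * ‖ΔW n ω‖^2 + α n ω) := by
      simp only [hF]
      apply Finset.sup'_le
      intro u hu
      have hun : u ≤ n := Nat.lt_succ_iff.mp (Finset.mem_range.mp hu)
      have h3 := Finset.sum_Ico_succ_top hun (fun k => lam * ‖ΔW k ω‖^2 + α k ω)
      have h4 : (∑ k ∈ Finset.Ico u (n+1), (lam * ‖ΔW k ω‖^2 + α k ω))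
          ≤ (Finset.range (n+1+1)).sup' Finset.nonempty_range_add_one
            (fun u => ∑ k ∈ Finset.Ico u (n+1), (lam * ‖ΔW k ω‖^2 + α k ω)) :=
        Finset.le_sup' (fun u => ∑ k ∈ Finset.Ico u (n+1), (lam * ‖ΔW k ω‖^2 + α k ω))
          (Finset.mem_range.mpr (by omega))
      linarith
    linarith
  -- the key strengthened induction
  have key : ∀ n, n ≤ N → ∀ ω,
      (∀ k < n, D k ω ≤ (N : ℝ) ^ (1 / (2 * c)) ∧ ‖ΔW k ω‖ ≤ 1) →
      ‖Y n ω‖ ≤ (lam + ‖ξ ω‖) * Real.exp (L + n*(K/(2*N)) + F n ω) := by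
    intro n
    induction n with
    | zero =>
      intro _ ω _
      rw [hY0 ω]
      have hz : ((0:ℕ):ℝ)*(K/(2*N)) = 0 := by simp
      have h1 : (1:ℝ) ≤ Real.exp (L + (0:ℕ)*(K/(2*N)) + F 0 ω) := by
        rw [← Real.exp_zero]
        apply Real.exp_le_exp.mpr
        linarith [hFnn 0 ω, hL0, hz]
      have h2 : (0:ℝ) ≤ lam + ‖ξ ω‖ := by linarith [norm_nonneg (ξ ω)]
      have h3 := le_mul_of_one_le_right h2 h1
      linarith [norm_nonneg (ξ ω)]
    | succ n ih =>
      intro hn1 ω hev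
      have hnN : n ≤ N := Nat.le_of_succ_le hn1
      have ihn := ih hnN ω (fun k hk => hev k (by omega))
      have hevn := hev n (by omega)
      have hΔ1 : ‖ΔW n ω‖ ≤ 1 := hevn.2
      set Δ : EuclideanSpace ℝ (Fin m) := ΔW n ω with hΔeq
      set x : EuclideanSpace ℝ (Fin d) := Y n ω with hxeq
      have hden : (0:ℝ) < 1 + (T / N) * ‖μ x‖ := by
        have : (0:ℝ) ≤ (T / N) * ‖μ x‖ := mul_nonneg (div_nonneg hT0 hN'.le) (norm_nonneg _)
        linarith
      have ht0 : (0:ℝ) ≤ (T / N) / (1 + (T / N) * ‖μ x‖) :=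
        div_nonneg (div_nonneg hT0 hN'.le) hden.le
      have hth : (T / N) / (1 + (T / N) * ‖μ x‖) ≤ T / N :=
        div_le_self (div_nonneg hT0 hN'.le)
          (by linarith [mul_nonneg (div_nonneg hT0 hN'.le) (norm_nonneg (μ x))])
      set v : EuclideanSpace ℝ (Fin d) := ((T / N) / (1 + (T / N) * ‖μ x‖)) • μ x with hveq
      set w : EuclideanSpace ℝ (Fin d) := σ x Δ with hweq
      have hYn1 : Y (n+1) ω = x + v + w := by
        rw [hveq, hweq, hxeq, hΔeq]; exact hYrec n ω
      have hvn : ‖v‖ = ((T / N) / (1 + (T / N) * ‖μ x‖)) * ‖μ x‖ := by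
        rw [hveq, norm_smul, Real.norm_eq_abs, abs_of_nonneg ht0]
      have hwb : ‖w‖ ≤ (‖σ 0‖ + c*‖x‖) * ‖Δ‖ := by
        rw [hweq]
        refine ((σ x).le_opNorm Δ).trans ?_
        exact mul_le_mul_of_nonneg_right (hσn x) (norm_nonneg _)
      by_cases hx1 : 1 ≤ ‖x‖
      · -- main case
        have hxpos : (0:ℝ) < ‖x‖ := lt_of_lt_of_le one_pos hx1
        have hxx2 : ‖x‖ ≤ ‖x‖^2 := aux_le_sq hx1
        have hBD : (lam + ‖ξ ω‖) * Real.exp (L + n*(K/(2*N)) + F n ω) ≤ D n ω := by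
          rw [hDF n ω]
          apply mul_le_mul_of_nonneg_left _ (by positivity)
          apply Real.exp_le_exp.mpr
          have hnK : (n:ℝ)*(K/(2*N)) ≤ K/2 := by
            have hcast : (n:ℝ) ≤ (N:ℝ) := by exact_mod_cast hnN
            have h0 : 0 ≤ K/(2*N) := by positivity
            calc (n:ℝ)*(K/(2*N)) ≤ (N:ℝ)*(K/(2*N)) := mul_le_mul_of_nonneg_right hcast h0
              _ = K/2 := by field_simp
          linarith [hLK, hL0]
        have hxR : ‖x‖ ≤ (N : ℝ) ^ (1 / (2 * c)) := le_trans ihn (hBD.trans hevn.1)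
        have hx2c : ‖x‖ ^ (2*c) ≤ (N:ℝ) := by
          calc ‖x‖ ^ (2*c) ≤ ((N : ℝ) ^ (1 / (2 * c))) ^ (2*c) :=
                Real.rpow_le_rpow (norm_nonneg _) hxR (by positivity)
            _ = (N:ℝ) := by
                rw [← Real.rpow_mul (Nat.cast_nonneg N), one_div,
                  inv_mul_cancel₀ (by positivity : (2*c) ≠ 0), Real.rpow_one]
        have hXc1 : (1:ℝ) ≤ ‖x‖ ^ c := by
          calc (1:ℝ) = (1:ℝ) ^ c := (Real.one_rpow c).symm
            _ ≤ ‖x‖ ^ c := Real.rpow_le_rpow (by norm_num) hx1 hc0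
        -- drift bound
        have hμb : ‖μ x‖ ≤ (‖μ 0‖ + 2*c) * (‖x‖ ^ c * ‖x‖) :=
          aux_mu_growth hc0 hμ00 hXc1 hx1 (hμn x)
        have hv2 : ‖v‖^2 ≤ (T^2*(‖μ 0‖ + 2*c)^2/N) * ‖x‖^2 := by
          have hvb : ‖v‖ ≤ (T/N) * ((‖μ 0‖ + 2*c) * (‖x‖ ^ c * ‖x‖)) := by
            rw [hvn]
            calc ((T / N) / (1 + (T / N) * ‖μ x‖)) * ‖μ x‖ ≤ (T/N) * ‖μ x‖ :=
                  mul_le_mul_of_nonneg_right hth (norm_nonneg _)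
              _ ≤ (T/N) * ((‖μ 0‖ + 2*c) * (‖x‖ ^ c * ‖x‖)) :=
                  mul_le_mul_of_nonneg_left hμb (by positivity)
          have hsq : ‖v‖^2 ≤ ((T/N) * ((‖μ 0‖ + 2*c) * (‖x‖ ^ c * ‖x‖)))^2 :=
            pow_le_pow_left₀ (norm_nonneg _) hvb 2
          have hcc : ‖x‖ ^ c * ‖x‖ ^ c = ‖x‖ ^ (2*c) := by
            rw [two_mul, Real.rpow_add hxpos]
          have hrw : ((T/N) * ((‖μ 0‖ + 2*c) * (‖x‖ ^ c * ‖x‖)))^2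
              = (T/N)^2 * (‖μ 0‖ + 2*c)^2 * ‖x‖ ^ (2*c) * ‖x‖^2 := by
            rw [← hcc]; ring
          rw [hrw] at hsq
          have h3 : (T/N)^2 * (‖μ 0‖ + 2*c)^2 * ‖x‖ ^ (2*c) * ‖x‖^2
              ≤ (T/N)^2 * (‖μ 0‖ + 2*c)^2 * (N:ℝ) * ‖x‖^2 :=
            mul_le_mul_of_nonneg_right
              (mul_le_mul_of_nonneg_left hx2c (by positivity : (0:ℝ) ≤ (T/N)^2 * (‖μ 0‖ + 2*c)^2))
              (sq_nonneg _)
          have h4 : (T/N)^2 * (‖μ 0‖ + 2*c)^2 * (N:ℝ) * ‖x‖^2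
              = (T^2*(‖μ 0‖ + 2*c)^2/N) * ‖x‖^2 := by
            field_simp
          linarith [h4.le, h4.ge]
        -- inner products
        have hiv : (inner ℝ x v : ℝ) ≤ (T/N) * ((c + ‖μ 0‖) * ‖x‖^2) := by
          rw [hveq, real_inner_smul_right]
          have hIb : (inner ℝ x (μ x) : ℝ) ≤ (c + ‖μ 0‖) * ‖x‖^2 :=
            aux_inner_mu hμ00 hx1 (hμi x)
          rcases le_or_gt 0 (inner ℝ x (μ x) : ℝ) with hI | hI
          · calc ((T / N) / (1 + (T / N) * ‖μ x‖)) * (inner ℝ x (μ x) : ℝ)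
                ≤ (T/N) * (inner ℝ x (μ x) : ℝ) := mul_le_mul_of_nonneg_right hth hI
              _ ≤ (T/N) * ((c + ‖μ 0‖) * ‖x‖^2) :=
                mul_le_mul_of_nonneg_left hIb (by positivity)
          · have h1 : ((T / N) / (1 + (T / N) * ‖μ x‖)) * (inner ℝ x (μ x) : ℝ) ≤ 0 :=
              mul_nonpos_of_nonneg_of_nonpos ht0 hI.le
            have h2 : (0:ℝ) ≤ (T/N) * ((c + ‖μ 0‖) * ‖x‖^2) := by positivity
            linarith
        have hiw : (inner ℝ x w : ℝ) = α n ω * ‖x‖^2 := by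
          have hx0 : ‖x‖ ≠ 0 := ne_of_gt hxpos
          rw [hα n ω, ← hxeq, ← hΔeq, ← hweq, if_pos hx1, real_inner_smul_left,
            real_inner_smul_right, pow_two]
          field_simp
        have hw2 : ‖w‖^2 ≤ lam * (‖x‖^2 * ‖Δ‖^2) :=
          aux_w_sq hc0 hσ00 hx1 (norm_nonneg Δ) (norm_nonneg w) hsig2 hwb
        -- quadratic expansion
        have hexp2 : ‖Y (n+1) ω‖^2 = ‖x‖^2 + 2*(inner ℝ x v : ℝ) + 2*(inner ℝ x w : ℝ)
            + ‖v + w‖^2 := by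
          rw [hYn1, add_assoc, norm_add_sq_real, inner_add_right]
          ring
        have hvw : ‖v + w‖^2 ≤ 2*‖v‖^2 + 2*‖w‖^2 := aux_norm_add_sq v w
        set E : ℝ := K/(N:ℝ) + 2*lam*‖Δ‖^2 + 2*(α n ω) with hE
        have hq : ‖Y (n+1) ω‖^2 ≤ ‖x‖^2 * (1 + E) := by
          have e1 : ‖x‖^2 * (1 + E) = ‖x‖^2
              + 2*((T/N) * ((c + ‖μ 0‖) * ‖x‖^2))
              + 2*(α n ω * ‖x‖^2)
              + (2*((T^2*(‖μ 0‖ + 2*c)^2/N) * ‖x‖^2) + 2*(lam * (‖x‖^2 * ‖Δ‖^2))) := by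
            rw [hE, hK]
            field_simp
            ring
          rw [hexp2, e1]
          linarith [hiw.le, hiw.ge]
        have h1E : ‖x‖^2 * (1 + E) ≤ ‖x‖^2 * Real.exp E := by
          apply mul_le_mul_of_nonneg_left _ (sq_nonneg _)
          linarith [Real.add_one_le_exp E]
        have hsqf : ‖Y (n+1) ω‖^2 ≤ (‖x‖ * Real.exp (E/2))^2 := by
          have h3 : Real.exp (E/2) * Real.exp (E/2) = Real.exp E := by
            rw [← Real.exp_add, add_halves]
          have h2 : (‖x‖ * Real.exp (E/2))^2 = ‖x‖^2 * Real.exp E := by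
            calc (‖x‖ * Real.exp (E/2))^2 = ‖x‖^2 * (Real.exp (E/2) * Real.exp (E/2)) := by ring
              _ = ‖x‖^2 * Real.exp E := by rw [h3]
          rw [h2]
          linarith
        have hstep : ‖Y (n+1) ω‖ ≤ ‖x‖ * Real.exp (E/2) :=
          aux_sq_le (norm_nonneg _) (mul_nonneg (norm_nonneg x) (Real.exp_pos (E/2)).le) hsqf
        have hE2 : E/2 = K/(2*N) + (lam * ‖Δ‖^2 + α n ω) := by
          rw [hE]; ring
        have hcast1 : (((n+1):ℕ):ℝ)*(K/(2*N)) = (n:ℝ)*(K/(2*N)) + K/(2*N) := by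
          push_cast; ring
        calc ‖Y (n+1) ω‖ ≤ ‖x‖ * Real.exp (E/2) := hstep
          _ ≤ ((lam + ‖ξ ω‖) * Real.exp (L + n*(K/(2*N)) + F n ω)) * Real.exp (E/2) :=
            mul_le_mul_of_nonneg_right ihn (Real.exp_pos _).le
          _ = (lam + ‖ξ ω‖) * Real.exp ((L + n*(K/(2*N)) + F n ω) + E/2) := by
            rw [mul_assoc, ← Real.exp_add]
          _ ≤ (lam + ‖ξ ω‖) * Real.exp (L + ((n+1):ℕ)*(K/(2*N)) + F (n+1) ω) := by
            apply mul_le_mul_of_nonneg_left _ (by positivity)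
            apply Real.exp_le_exp.mpr
            rw [hE2]
            have hFs := hFstep n ω
            rw [← hΔeq] at hFs
            linarith [hcast1.le, hcast1.ge]
      · -- easy case : ‖Y n ω‖ < 1
        push_neg at hx1
        have hv1 : ‖v‖ ≤ 1 := by
          rw [hvn, div_mul_eq_mul_div, div_le_one hden]
          linarith [mul_nonneg (div_nonneg hT0 hN'.le) (norm_nonneg (μ x))]
        have hwb1 : ‖w‖ ≤ ‖σ 0‖ + c := by
          refine hwb.trans ?_
          have h0 : c*‖x‖ ≤ c*1 := mul_le_mul_of_nonneg_left hx1.le hc0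
          have h1 : ‖σ 0‖ + c*‖x‖ ≤ ‖σ 0‖ + c := by rw [mul_one] at h0; linarith
          have h2 : (‖σ 0‖ + c*‖x‖) * ‖Δ‖ ≤ (‖σ 0‖ + c*‖x‖) * 1 :=
            mul_le_mul_of_nonneg_left hΔ1 (by positivity)
          linarith
        have hY1b : ‖Y (n+1) ω‖ ≤ 2 + c + ‖σ 0‖ := by
          rw [hYn1]
          have h1 := norm_add_le (x + v) w
          have h2 := norm_add_le x v
          linarith
        have hexpmono : Real.exp L ≤ Real.exp (L + ((n+1):ℕ)*(K/(2*N)) + F (n+1) ω) := by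
          apply Real.exp_le_exp.mpr
          have h1 := hFnn (n+1) ω
          have h2 : (0:ℝ) ≤ (((n+1):ℕ):ℝ)*(K/(2*N)) := by positivity
          linarith
        calc ‖Y (n+1) ω‖ ≤ 2 + c + ‖σ 0‖ := hY1b
          _ = Real.exp L := hexpL.symm
          _ ≤ Real.exp (L + ((n+1):ℕ)*(K/(2*N)) + F (n+1) ω) := hexpmono
          _ ≤ (lam + ‖ξ ω‖) * Real.exp (L + ((n+1):ℕ)*(K/(2*N)) + F (n+1) ω) :=
            le_mul_of_one_le_left (Real.exp_pos _).le (by linarith [norm_nonneg (ξ ω)])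
  -- conclude
  intro n hn ω hev
  refine (key n hn ω hev).trans ?_
  rw [hDF n ω]
  apply mul_le_mul_of_nonneg_left _ (by positivity)
  apply Real.exp_le_exp.mpr
  have hnK : (n:ℝ)*(K/(2*N)) ≤ K/2 := by
    have hcast : (n:ℝ) ≤ (N:ℝ) := by exact_mod_cast hn
    have h0 : 0 ≤ K/(2*N) := by positivity
    calc (n:ℝ)*(K/(2*N)) ≤ (N:ℝ)*(K/(2*N)) := mul_le_mul_of_nonneg_right hcast h0
      _ = K/2 := by field_simp
  linarith [hLK]
end

section
/- Let α_n^N := 1_{‖Y_n^N‖≥1}⟨Y_n^N/‖Y_n^N‖, (σ(Y_n^N)/‖Y_n^N‖)ΔW_n^N⟩ be the martingale increments associated with the tamed Euler scheme. Then for every p ∈ [1,∞), sup over z ∈ {-1,1} and N ∈ ℕ of E[ sup_{n∈{0,…,N}} exp(p z ∑_{k=0}^{n-1} α_k^N) ] is finite; in fact it is bounded by 2^p exp(4 p³ T (c+‖σ(0)‖)²) for p ≥ 2. -/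
open MeasureTheory ProbabilityTheory Real
open scoped NNReal ENNReal

lemma tame_gauss1d (a : ℝ) (v : ℝ≥0) :
    ∫⁻ x, ENNReal.ofReal (Real.exp (a * x)) ∂(gaussianReal 0 v)
      = ENNReal.ofReal (Real.exp (a ^ 2 * v / 2)) := by
  rcases eq_or_ne v 0 with rfl | hv
  · simp [gaussianReal_zero_var, lintegral_dirac]
  have hvpos : (0 : ℝ) < (v : ℝ) := lt_of_le_of_ne v.2 (by exact_mod_cast hv.symm)
  have key : ∀ x : ℝ, gaussianPDF 0 v x * ENNReal.ofReal (Real.exp (a * x))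
      = ENNReal.ofReal (Real.exp (a ^ 2 * v / 2)) * gaussianPDF (a * v) v x := by
    intro x
    rw [gaussianPDF, gaussianPDF, ← ENNReal.ofReal_mul (gaussianPDFReal_nonneg _ _ _),
      ← ENNReal.ofReal_mul (Real.exp_nonneg _)]
    congr 1
    have hexp : Real.exp (-(x - 0) ^ 2 / (2 * v)) * Real.exp (a * x)
        = Real.exp (a ^ 2 * v / 2) * Real.exp (-(x - a * v) ^ 2 / (2 * v)) := by
      rw [← Real.exp_add, ← Real.exp_add]
      congr 1
      field_simp
      ring
    simp only [gaussianPDFReal]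
    rw [mul_assoc, hexp]
    ring
  rw [gaussianReal_of_var_ne_zero _ hv,
    lintegral_withDensity_eq_lintegral_mul _ (measurable_gaussianPDF 0 v) (by fun_prop)]
  simp only [Pi.mul_apply, key]
  rw [lintegral_const_mul _ (measurable_gaussianPDF _ v)]
  have : ∫⁻ x, gaussianPDF (a * v) v x = 1 := lintegral_gaussianPDFReal_eq_one (a * v) hv
  rw [this, mul_one]

lemma tame_lintegral_pi_prod {n : ℕ} (μ : Fin n → Measure ℝ) [∀ i, SigmaFinite (μ i)]
    (f : Fin n → ℝ → ℝ≥0∞) (hf : ∀ i, Measurable (f i)) :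
    ∫⁻ x : Fin n → ℝ, ∏ i, f i (x i) ∂Measure.pi μ = ∏ i, ∫⁻ x, f i x ∂μ i := by
  induction n with
  | zero => simp [lintegral_const, Measure.pi_empty_univ]
  | succ n ih =>
    rw [(MeasurePreserving.symm _ (measurePreserving_piFinSuccAbove μ 0)).lintegral_map_equiv
      (fun x : Fin (n+1) → ℝ => ∏ i, f i (x i)) (MeasurableEquiv.piFinSuccAbove (fun _ => ℝ) 0).symm]
    have heq : ∀ y : ℝ × (Fin n → ℝ),
        (∏ i, f i ((MeasurableEquiv.piFinSuccAbove (fun _ => ℝ) 0).symm y i))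
          = f 0 y.1 * ∏ j, f (Fin.succ j) (y.2 j) := by
      intro y
      rw [Fin.prod_univ_succ]
      simp [MeasurableEquiv.piFinSuccAbove, Fin.insertNthEquiv, Fin.insertNth_zero]
    simp_rw [heq]
    have hg : Measurable (fun y : Fin n → ℝ => ∏ j, f (Fin.succ j) (y j)) :=
      Finset.measurable_prod _ fun j _ => (hf _).comp (measurable_pi_apply j)
    rw [lintegral_prod_mul (hf 0).aemeasurable hg.aemeasurable]
    rw [ih _ _ (fun j => hf _), Fin.prod_univ_succ]
    simp [Fin.zero_succAbove]

lemma tame_gaussE (m : ℕ) (θ : ℝ) (v : EuclideanSpace ℝ (Fin m)) (s : ℝ≥0) :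
    ∫⁻ w : Fin m → ℝ, ENNReal.ofReal (Real.exp (θ * (inner ℝ v (WithLp.toLp 2 w) : ℝ)))
        ∂(Measure.pi fun _ : Fin m => gaussianReal 0 s)
      = ENNReal.ofReal (Real.exp (θ ^ 2 * ‖v‖ ^ 2 * s / 2)) := by
  have hpt : ∀ w : Fin m → ℝ,
      ENNReal.ofReal (Real.exp (θ * (inner ℝ v (WithLp.toLp 2 w) : ℝ)))
        = ∏ i, ENNReal.ofReal (Real.exp ((θ * v i) * w i)) := by
    intro w
    rw [← ENNReal.ofReal_prod_of_nonneg (fun i _ => (Real.exp_nonneg _)), ← Real.exp_sum]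
    congr 1
    simp [PiLp.inner_apply, RCLike.inner_apply, conj_trivial, Finset.mul_sum, mul_assoc]
    exact Finset.sum_congr rfl fun i _ => by ring
  simp_rw [hpt]
  have hmain := tame_lintegral_pi_prod (fun _ : Fin m => gaussianReal 0 s)
    (fun i x => ENNReal.ofReal (Real.exp ((θ * v i) * x))) (fun i => by fun_prop)
  rw [hmain]
  have h1 : ∀ i : Fin m, ∫⁻ x, ENNReal.ofReal (Real.exp ((θ * v i) * x)) ∂(gaussianReal 0 s)
      = ENNReal.ofReal (Real.exp ((θ * v i) ^ 2 * s / 2)) := fun i => tame_gauss1d _ s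
  simp_rw [h1]
  rw [← ENNReal.ofReal_prod_of_nonneg (fun i _ => (Real.exp_nonneg _)), ← Real.exp_sum]
  have hnorm : ‖v‖ ^ 2 = ∑ i, (v i) ^ 2 := by
    rw [EuclideanSpace.norm_eq, Real.sq_sqrt (by positivity)]
    simp [sq_abs]
  congr 1
  rw [hnorm, Finset.mul_sum, Finset.sum_mul, Finset.sum_div]
  congr 1
  exact Finset.sum_congr rfl fun i _ => by ring

lemma tame_ofReal_mul_right (g e : ℝ) (he : 0 ≤ e) :
    ENNReal.ofReal (g * e) = ENNReal.ofReal g * ENNReal.ofReal e := by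
  rcases le_or_gt 0 g with hg | hg
  · exact ENNReal.ofReal_mul hg
  · rw [ENNReal.ofReal_of_nonpos (mul_nonpos_iff.2 (Or.inr ⟨hg.le, he⟩)),
      ENNReal.ofReal_of_nonpos hg.le, zero_mul]

lemma tame_freeze {Ω : Type*} [MeasurableSpace Ω] (P : Measure Ω) [IsProbabilityMeasure P]
    {m : ℕ} (W : Ω → EuclideanSpace ℝ (Fin m)) (hW : Measurable W)
    (G : Ω → ℝ) (hG : Measurable G)
    (V : Ω → EuclideanSpace ℝ (Fin m)) (hV : Measurable V)
    (hindep : IndepFun (fun ω => (G ω, V ω)) W P)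
    (s : ℝ≥0) (hlaw : Measure.map W P =
      Measure.map (WithLp.toLp 2) (Measure.pi (fun _ : Fin m => gaussianReal 0 s)))
    (θ : ℝ) :
    ∫⁻ ω, ENNReal.ofReal (G ω * Real.exp (θ * (inner ℝ (V ω) (W ω) : ℝ))) ∂P
      = ∫⁻ ω, ENNReal.ofReal (G ω * Real.exp (θ ^ 2 * ‖V ω‖ ^ 2 * s / 2)) ∂P := by
  have hZ : Measurable (fun ω => (G ω, V ω)) := hG.prodMk hV
  set Φ : (ℝ × EuclideanSpace ℝ (Fin m)) × EuclideanSpace ℝ (Fin m) → ℝ≥0∞ :=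
    fun q => ENNReal.ofReal (q.1.1 * Real.exp (θ * (inner ℝ q.1.2 q.2 : ℝ))) with hΦdef
  have hΦ : Measurable Φ := by
    apply Measurable.ennreal_ofReal
    apply Measurable.mul
    · exact measurable_fst.fst.comp measurable_id |>.mono le_rfl le_rfl
    · exact (Real.measurable_exp).comp ((measurable_const.mul
        ((measurable_fst.snd).inner measurable_snd)))
  have hmap : Measure.map (fun ω => ((G ω, V ω), W ω)) P
      = (Measure.map (fun ω => (G ω, V ω)) P).prod (Measure.map W P) :=
    (indepFun_iff_map_prod_eq_prod_map_map hZ.aemeasurable hW.aemeasurable).mp hindep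
  have step1 : ∫⁻ ω, ENNReal.ofReal (G ω * Real.exp (θ * (inner ℝ (V ω) (W ω) : ℝ))) ∂P
      = ∫⁻ q, Φ q ∂((Measure.map (fun ω => (G ω, V ω)) P).prod (Measure.map W P)) := by
    rw [← hmap, lintegral_map hΦ (hZ.prodMk hW)]
  rw [step1, lintegral_prod _ hΦ.aemeasurable]
  have inner_eq : ∀ z : ℝ × EuclideanSpace ℝ (Fin m),
      ∫⁻ w, Φ (z, w) ∂(Measure.map W P)
        = ENNReal.ofReal (z.1 * Real.exp (θ ^ 2 * ‖z.2‖ ^ 2 * s / 2)) := by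
    intro z
    rw [hlaw, lintegral_map (f := fun w => Φ (z, w)) (hΦ.comp measurable_prodMk_left)
      (WithLp.measurable_toLp 2 _)]
    simp only [hΦdef]
    calc ∫⁻ w, ENNReal.ofReal (z.1 * Real.exp (θ * (inner ℝ z.2 (WithLp.toLp 2 w) : ℝ)))
          ∂(Measure.pi fun _ : Fin m => gaussianReal 0 s)
        = ∫⁻ w, ENNReal.ofReal z.1 * ENNReal.ofReal (Real.exp (θ * (inner ℝ z.2 (WithLp.toLp 2 w) : ℝ)))
          ∂(Measure.pi fun _ : Fin m => gaussianReal 0 s) := by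
          congr 1; funext w; exact tame_ofReal_mul_right _ _ (Real.exp_nonneg _)
      _ = ENNReal.ofReal z.1 * ∫⁻ w, ENNReal.ofReal (Real.exp (θ * (inner ℝ z.2 (WithLp.toLp 2 w) : ℝ)))
          ∂(Measure.pi fun _ : Fin m => gaussianReal 0 s) := by
          have hme : Measurable fun w : Fin m → ℝ =>
              ENNReal.ofReal (Real.exp (θ * (inner ℝ z.2 (WithLp.toLp 2 w) : ℝ))) :=
            Measurable.ennreal_ofReal (Real.measurable_exp.comp
              ((measurable_const.inner (WithLp.measurable_toLp 2 _)).const_mul θ))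
          exact lintegral_const_mul _ hme
      _ = ENNReal.ofReal z.1 * ENNReal.ofReal (Real.exp (θ ^ 2 * ‖z.2‖ ^ 2 * s / 2)) := by
          congr 1
          exact tame_gaussE m θ z.2 s
      _ = ENNReal.ofReal (z.1 * Real.exp (θ ^ 2 * ‖z.2‖ ^ 2 * s / 2)) :=
          (tame_ofReal_mul_right _ _ (Real.exp_nonneg _)).symm
  simp_rw [inner_eq]
  rw [lintegral_map _ hZ]
  · exact Measurable.ennreal_ofReal (measurable_fst.mul
      ((Real.measurable_exp).comp (((measurable_snd.norm).pow measurable_const).const_mul _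
        |>.mul measurable_const |>.div_const _)))

lemma tame_sup'_sq {s : Finset ℕ} (H : s.Nonempty) (f : ℕ → ℝ) (hf : ∀ i ∈ s, 0 ≤ f i) :
    s.sup' H (fun i => f i ^ 2) = (s.sup' H f) ^ 2 := by
  apply le_antisymm
  · exact Finset.sup'_le _ _ fun i hi => pow_le_pow_left₀ (hf i hi) (Finset.le_sup' f hi) 2
  · obtain ⟨i, hi, heq⟩ := Finset.exists_mem_eq_sup' H f
    rw [heq]
    exact Finset.le_sup' (fun i => f i ^ 2) hi

lemma tame_sup_succ (x : ℕ → ℝ) (k : ℕ) :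
    (Finset.range (k+1+1)).sup' Finset.nonempty_range_add_one x
      = x (k+1) ⊔ (Finset.range (k+1)).sup' Finset.nonempty_range_add_one x := by
  apply le_antisymm
  · apply Finset.sup'_le
    intro j hj
    rcases Nat.lt_succ_iff_lt_or_eq.mp (Finset.mem_range.mp hj) with h | rfl
    · exact le_sup_of_le_right (Finset.le_sup' x (Finset.mem_range.mpr h))
    · exact le_sup_left
  · apply sup_le
    · exact Finset.le_sup' x (Finset.self_mem_range_succ (k+1))
    · exact Finset.sup'_le _ _ fun j hj => Finset.le_sup' x
        (Finset.mem_range.mpr (lt_trans (Finset.mem_range.mp hj) (Nat.lt_succ_self _)))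

lemma tame_pathwise (x : ℕ → ℝ) (hx : ∀ n, 0 ≤ x n) (n : ℕ) :
    ((Finset.range (n+1)).sup' Finset.nonempty_range_add_one x) ^ 2 / 2
      + ∑ k ∈ Finset.range n,
          ((Finset.range (k+1)).sup' Finset.nonempty_range_add_one x) * x (k+1)
    ≤ ((Finset.range (n+1)).sup' Finset.nonempty_range_add_one x) * x n
      + ∑ k ∈ Finset.range n,
          ((Finset.range (k+1)).sup' Finset.nonempty_range_add_one x) * x k := by
  induction n with
  | zero =>
    have h0 : (Finset.range (0+1)).sup' Finset.nonempty_range_add_one x = x 0 := by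
      norm_num [Finset.range_one]
    simp only [Finset.range_zero, Finset.sum_empty, add_zero, h0]
    nlinarith [hx 0]
  | succ n ih =>
    rw [Finset.sum_range_succ, Finset.sum_range_succ, tame_sup_succ x n]
    have hxM : x (n+1) ≤ (Finset.range (n+1+1)).sup' Finset.nonempty_range_add_one x :=
      Finset.le_sup' x (Finset.self_mem_range_succ (n+1))
    set A : ℝ := (Finset.range (n+1)).sup' Finset.nonempty_range_add_one x with hA
    have hkey : (x (n+1) ⊔ A) ^ 2 / 2 + A * x (n+1)
        ≤ (x (n+1) ⊔ A) * x (n+1) + A ^ 2 / 2 := by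
      rcases le_total (x (n+1)) A with h | h
      · rw [sup_eq_right.mpr h]
        nlinarith
      · rw [sup_eq_left.mpr h]
        nlinarith [sq_nonneg (x (n+1) - A)]
    linarith [ih]

lemma tame_split {Ω : Type*} [MeasurableSpace Ω] (P : Measure Ω)
    (a b : ℝ) (ha : 0 ≤ a) (hb : 0 ≤ b)
    (u w : Ω → ℝ) (hu : Measurable u) (hw : Measurable w)
    (hu0 : ∀ ω, 0 ≤ u ω) (hw0 : ∀ ω, 0 ≤ w ω)
    (s : Finset ℕ) (v : ℕ → Ω → ℝ) (hv : ∀ k, Measurable (v k)) (hv0 : ∀ k ω, 0 ≤ v k ω) :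
    ∫⁻ ω, ENNReal.ofReal (a * u ω + b * w ω + ∑ k ∈ s, 4 * v k ω) ∂P
      = ENNReal.ofReal a * ∫⁻ ω, ENNReal.ofReal (u ω) ∂P
        + ENNReal.ofReal b * ∫⁻ ω, ENNReal.ofReal (w ω) ∂P
        + ∑ k ∈ s, ENNReal.ofReal 4 * ∫⁻ ω, ENNReal.ofReal (v k ω) ∂P := by
  have hpt : ∀ ω, ENNReal.ofReal (a * u ω + b * w ω + ∑ k ∈ s, 4 * v k ω)
      = ENNReal.ofReal a * ENNReal.ofReal (u ω) + ENNReal.ofReal b * ENNReal.ofReal (w ω)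
        + ∑ k ∈ s, ENNReal.ofReal 4 * ENNReal.ofReal (v k ω) := by
    intro ω
    rw [ENNReal.ofReal_add (add_nonneg (mul_nonneg ha (hu0 ω)) (mul_nonneg hb (hw0 ω)))
        (Finset.sum_nonneg fun k _ => mul_nonneg (by norm_num) (hv0 k ω)),
      ENNReal.ofReal_add (mul_nonneg ha (hu0 ω)) (mul_nonneg hb (hw0 ω)),
      ENNReal.ofReal_mul ha, ENNReal.ofReal_mul hb,
      ENNReal.ofReal_sum_of_nonneg (fun k _ => mul_nonneg (by norm_num) (hv0 k ω))]
    congr 1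
    exact Finset.sum_congr rfl fun k _ => ENNReal.ofReal_mul (by norm_num)
  simp_rw [hpt]
  rw [lintegral_add_left (f := fun ω => ENNReal.ofReal a * ENNReal.ofReal (u ω)
      + ENNReal.ofReal b * ENNReal.ofReal (w ω)) (((hu.ennreal_ofReal).const_mul _).add
      ((hw.ennreal_ofReal).const_mul _)),
    lintegral_add_left ((hu.ennreal_ofReal).const_mul _),
    lintegral_const_mul _ hu.ennreal_ofReal, lintegral_const_mul _ hw.ennreal_ofReal,
    lintegral_finset_sum _ (fun k _ => ((hv k).ennreal_ofReal).const_mul _)]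
  congr 1
  exact Finset.sum_congr rfl fun k _ => lintegral_const_mul _ (hv k).ennreal_ofReal

set_option maxHeartbeats 2000000 in
/-- Maximal exponential moment bound for the martingale increments `α_n^N` associated
with the tamed Euler scheme. -/
theorem exp_moment_sup_martingale_alpha
    {Ω : Type*} [MeasurableSpace Ω] (P : Measure Ω) [IsProbabilityMeasure P]
    (d m : ℕ) (T c : ℝ) (hT : 0 < T) (hc : 0 < c)
    (σ : EuclideanSpace ℝ (Fin d) → (EuclideanSpace ℝ (Fin m) →L[ℝ] EuclideanSpace ℝ (Fin d)))
    (hσ : ∀ x y, ‖σ x - σ y‖ ≤ c * ‖x - y‖)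
    (ℱ : ℕ → ℕ → MeasurableSpace Ω)
    (hℱmono : ∀ N, Monotone (ℱ N))
    (hℱle : ∀ N n, ℱ N n ≤ ‹MeasurableSpace Ω›)
    (Y : ℕ → ℕ → Ω → EuclideanSpace ℝ (Fin d))
    (hYmeas : ∀ N n, Measurable[ℱ N n] (Y N n))
    (ΔW : ℕ → ℕ → Ω → EuclideanSpace ℝ (Fin m))
    (hWmeas : ∀ N n, Measurable[ℱ N (n+1)] (ΔW N n))
    (hWindep : ∀ N n, Indep (MeasurableSpace.comap (ΔW N n) inferInstance) (ℱ N n) P)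
    (hWlaw : ∀ N, 1 ≤ N → ∀ n,
      Measure.map (ΔW N n) P =
        Measure.map (WithLp.toLp 2) (Measure.pi (fun _ : Fin m => gaussianReal 0 (T / N).toNNReal)))
    (α : ℕ → ℕ → Ω → ℝ)
    (hα : ∀ N n ω, α N n ω = if 1 ≤ ‖Y N n ω‖ then
      (inner ℝ (‖Y N n ω‖⁻¹ • Y N n ω) (‖Y N n ω‖⁻¹ • (σ (Y N n ω) (ΔW N n ω))) : ℝ) else 0) :
    ∀ p : ℝ, 1 ≤ p →
      (∃ C : ℝ, ∀ z : ℝ, (z = -1 ∨ z = 1) → ∀ N : ℕ, 1 ≤ N →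
        (∫ ω, (Finset.range (N+1)).sup' Finset.nonempty_range_add_one
          (fun n => Real.exp (p * z * ∑ k ∈ Finset.range n, α N k ω)) ∂P) ≤ C) ∧
      (2 ≤ p → ∀ z : ℝ, (z = -1 ∨ z = 1) → ∀ N : ℕ, 1 ≤ N →
        (∫ ω, (Finset.range (N+1)).sup' Finset.nonempty_range_add_one
          (fun n => Real.exp (p * z * ∑ k ∈ Finset.range n, α N k ω)) ∂P)
        ≤ 2 ^ p * Real.exp (4 * p^3 * T * (c + ‖σ 0‖)^2)) := by
  classical
  intro p hp
  set L : ℝ := c + ‖σ 0‖ with hLdef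
  have hL0 : 0 ≤ L := add_nonneg hc.le (norm_nonneg _)
  -- continuity of σ
  have hσcont : Continuous σ := by
    have hlip : LipschitzWith c.toNNReal σ := by
      apply LipschitzWith.of_dist_le_mul
      intro a b
      rw [dist_eq_norm, dist_eq_norm, Real.coe_toNNReal _ hc.le]
      exact hσ a b
    exact hlip.continuous
  -- the vector field vf
  set vf : EuclideanSpace ℝ (Fin d) → EuclideanSpace ℝ (Fin m) :=
    fun y => if 1 ≤ ‖y‖ then (‖y‖ ^ 2)⁻¹ • ((ContinuousLinearMap.adjoint (σ y)) y) else 0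
    with hvfdef
  have hvf_meas : Measurable vf := by
    apply Measurable.ite (measurableSet_le measurable_const measurable_norm)
    · apply Measurable.smul (f := fun x : EuclideanSpace ℝ (Fin d) => (‖x‖ ^ 2)⁻¹)
        (g := fun x => (ContinuousLinearMap.adjoint (σ x)) x)
      · exact (measurable_norm.pow_const 2).inv
      · have hcont : Continuous fun y : EuclideanSpace ℝ (Fin d) =>
            (ContinuousLinearMap.adjoint (σ y)) y :=
          Continuous.clm_apply ((ContinuousLinearMap.adjoint :
            (EuclideanSpace ℝ (Fin m) →L[ℝ] EuclideanSpace ℝ (Fin d)) ≃ₗᵢ[ℝ]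
            (EuclideanSpace ℝ (Fin d) →L[ℝ] EuclideanSpace ℝ (Fin m))).continuous.comp hσcont)
            continuous_id
        exact hcont.measurable
    · exact measurable_const
  have hvf_norm : ∀ y, ‖vf y‖ ≤ L := by
    intro y
    rw [hvfdef]
    simp only
    by_cases h : 1 ≤ ‖y‖
    · rw [if_pos h]
      have hadj : ‖(ContinuousLinearMap.adjoint (σ y))‖ = ‖σ y‖ :=
        LinearIsometryEquiv.norm_map _ _
      have h1 : ‖(ContinuousLinearMap.adjoint (σ y)) y‖ ≤ ‖σ y‖ * ‖y‖ := by
        calc ‖(ContinuousLinearMap.adjoint (σ y)) y‖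
            ≤ ‖(ContinuousLinearMap.adjoint (σ y))‖ * ‖y‖ :=
              ContinuousLinearMap.le_opNorm _ _
          _ = ‖σ y‖ * ‖y‖ := by rw [hadj]
      have h2 : ‖σ y‖ ≤ c * ‖y‖ + ‖σ 0‖ := by
        have := hσ y 0
        rw [sub_zero] at this
        have htri := norm_sub_norm_le (σ y) (σ 0)
        linarith
      rw [norm_smul, Real.norm_eq_abs, abs_of_nonneg (by positivity)]
      have hy1 : (0:ℝ) < ‖y‖ := lt_of_lt_of_le one_pos h
      rw [hLdef]
      have hinv : (‖y‖ ^ 2)⁻¹ = ‖y‖⁻¹ * ‖y‖⁻¹ := by rw [sq, mul_inv]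
      calc (‖y‖ ^ 2)⁻¹ * ‖(ContinuousLinearMap.adjoint (σ y)) y‖
          ≤ (‖y‖ ^ 2)⁻¹ * ((c * ‖y‖ + ‖σ 0‖) * ‖y‖) := by
            apply mul_le_mul_of_nonneg_left _ (by positivity)
            calc ‖(ContinuousLinearMap.adjoint (σ y)) y‖ ≤ ‖σ y‖ * ‖y‖ := h1
              _ ≤ (c * ‖y‖ + ‖σ 0‖) * ‖y‖ :=
                  mul_le_mul_of_nonneg_right h2 (norm_nonneg _)
        _ = (c * ‖y‖ + ‖σ 0‖) / ‖y‖ := by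
            rw [hinv]; field_simp
        _ ≤ c + ‖σ 0‖ := by
            rw [div_le_iff₀ hy1]
            nlinarith [norm_nonneg (σ 0)]
    · rw [if_neg h]
      simpa using hL0
  -- representation of α
  have hαrep : ∀ N k ω, α N k ω = (inner ℝ (vf (Y N k ω)) (ΔW N k ω) : ℝ) := by
    intro N k ω
    rw [hα N k ω, hvfdef]
    simp only
    by_cases h : 1 ≤ ‖Y N k ω‖
    · rw [if_pos h, if_pos h]
      rw [real_inner_smul_left, real_inner_smul_right, real_inner_smul_left,
        ContinuousLinearMap.adjoint_inner_left]
      rw [sq, mul_inv]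
      ring
    · rw [if_neg h, if_neg h, inner_zero_left]
  -- the main quantitative bound
  have key : ∀ z : ℝ, (z = -1 ∨ z = 1) → ∀ N : ℕ, 1 ≤ N →
      (∫ ω, (Finset.range (N+1)).sup' Finset.nonempty_range_add_one
        (fun n => Real.exp (p * z * ∑ k ∈ Finset.range n, α N k ω)) ∂P)
      ≤ 4 * Real.exp (p ^ 2 * L ^ 2 * T / 2) := by
    intro z hz N hN
    have hz2 : z ^ 2 = 1 := by rcases hz with rfl | rfl <;> norm_num
    have hNpos : (0:ℝ) < N := by exact_mod_cast hN
    set τ : ℝ≥0 := (T / N).toNNReal with hτdef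
    have hτ : (τ : ℝ) = T / N := Real.coe_toNNReal _ (le_of_lt (by positivity))
    set θ : ℝ := p * z / 2 with hθdef
    set S : ℕ → Ω → ℝ := fun n ω => ∑ k ∈ Finset.range n, α N k ω with hSdef
    set x : ℕ → Ω → ℝ := fun n ω => Real.exp (θ * S n ω) with hxdef
    set M : ℕ → Ω → ℝ := fun n ω => (Finset.range (n+1)).sup' Finset.nonempty_range_add_one
      (fun j => x j ω) with hMdef
    have hSapp : ∀ n ω, S n ω = ∑ k ∈ Finset.range n, α N k ω := fun n ω => rfl
    have hxapp : ∀ n ω, x n ω = Real.exp (θ * S n ω) := fun n ω => rfl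
    have hMapp : ∀ n ω, M n ω = (Finset.range (n+1)).sup' Finset.nonempty_range_add_one
      (fun j => x j ω) := fun n ω => rfl
    -- measurability
    have hαg : ∀ k, Measurable (α N k) := by
      intro k
      have h1 : Measurable fun ω => vf (Y N k ω) :=
        hvf_meas.comp ((hYmeas N k).mono (hℱle N k) le_rfl)
      have h2 : Measurable (ΔW N k) := (hWmeas N k).mono (hℱle N (k+1)) le_rfl
      have heq : α N k = fun ω => (inner ℝ (vf (Y N k ω)) (ΔW N k ω) : ℝ) := funext (hαrep N k)
      rw [heq]
      exact h1.inner h2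
    have hα𝒢 : ∀ k, Measurable[ℱ N (k+1)] (α N k) := by
      intro k
      have h1 : Measurable[ℱ N (k+1)] fun ω => vf (Y N k ω) :=
        hvf_meas.comp ((hYmeas N k).mono (hℱmono N (Nat.le_succ k)) le_rfl)
      have heq : α N k = fun ω => (inner ℝ (vf (Y N k ω)) (ΔW N k ω) : ℝ) := funext (hαrep N k)
      rw [heq]
      exact h1.inner (hWmeas N k)
    have hS𝒢 : ∀ n, Measurable[ℱ N n] (S n) :=
      fun n => Finset.measurable_sum _ fun k hk =>
        (hα𝒢 k).mono (hℱmono N (Finset.mem_range.mp hk)) le_rfl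
    have hSg : ∀ n, Measurable (S n) := fun n =>
      Finset.measurable_sum _ fun k _ => hαg k
    have hx𝒢 : ∀ n, Measurable[ℱ N n] (x n) := fun n =>
      Real.measurable_exp.comp ((hS𝒢 n).const_mul θ)
    have hxg : ∀ n, Measurable (x n) := fun n =>
      Real.measurable_exp.comp ((hSg n).const_mul θ)
    have hxpos : ∀ n ω, 0 < x n ω := fun n ω => Real.exp_pos _
    have hM𝒢 : ∀ n, Measurable[ℱ N n] (M n) := by
      intro n
      induction n with
      | zero =>
        have : M 0 = x 0 := by
          funext ω
          rw [hMapp]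
          norm_num [Finset.range_one]
        rw [this]
        exact hx𝒢 0
      | succ n ih =>
        have : M (n+1) = fun ω => x (n+1) ω ⊔ M n ω := by
          funext ω
          rw [hMapp, hMapp]
          exact tame_sup_succ (fun j => x j ω) n
        rw [this]
        exact (hx𝒢 (n+1)).sup (ih.mono (hℱmono N (Nat.le_succ n)) le_rfl)
    have hMg : ∀ n, Measurable (M n) := fun n =>
      Finset.measurable_range_sup'' fun k _ => hxg k
    have hxleM : ∀ n ω, x n ω ≤ M n ω := fun n ω =>
      Finset.le_sup' (fun j => x j ω) (Finset.self_mem_range_succ n)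
    have hMpos : ∀ n ω, 0 < M n ω := fun n ω => lt_of_lt_of_le (hxpos n ω) (hxleM n ω)
    have hMmono : ∀ k n, k ≤ n → ∀ ω, M k ω ≤ M n ω := by
      intro k n hkn ω
      apply Finset.sup'_le
      intro j hj
      exact Finset.le_sup' (fun j => x j ω)
        (Finset.mem_range.mpr (lt_of_lt_of_le (Finset.mem_range.mp hj) (by omega)))
    -- freezing
    have hfreeze : ∀ (k : ℕ) (θ' : ℝ) (G : Ω → ℝ), Measurable[ℱ N k] G →
        ∫⁻ ω, ENNReal.ofReal (G ω * Real.exp (θ' * α N k ω)) ∂P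
          = ∫⁻ ω, ENNReal.ofReal (G ω * Real.exp (θ' ^ 2 * ‖vf (Y N k ω)‖ ^ 2 * τ / 2)) ∂P := by
      intro k θ' G hG
      have hV𝒢 : Measurable[ℱ N k] fun ω => vf (Y N k ω) := hvf_meas.comp (hYmeas N k)
      have hGg : Measurable G := hG.mono (hℱle N k) le_rfl
      have hVg : Measurable fun ω => vf (Y N k ω) := hV𝒢.mono (hℱle N k) le_rfl
      have hWg : Measurable (ΔW N k) := (hWmeas N k).mono (hℱle N (k+1)) le_rfl
      have hcomap : MeasurableSpace.comap (fun ω => (G ω, vf (Y N k ω))) inferInstance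
          ≤ ℱ N k := (hG.prodMk hV𝒢).comap_le
      have hindep : IndepFun (fun ω => (G ω, vf (Y N k ω))) (ΔW N k) P :=
        (indep_of_indep_of_le_right (hWindep N k) hcomap).symm
      have hfr := tame_freeze P (ΔW N k) hWg G hGg _ hVg hindep τ (hWlaw N hN k) θ'
      simp_rw [hαrep N k]
      exact hfr
    -- one-step upper bound
    have hfree_ub : ∀ (k : ℕ) (θ' : ℝ) (G : Ω → ℝ), Measurable[ℱ N k] G →
        ∫⁻ ω, ENNReal.ofReal (G ω * Real.exp (θ' * α N k ω)) ∂P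
          ≤ ENNReal.ofReal (Real.exp (θ' ^ 2 * L ^ 2 * τ / 2))
            * ∫⁻ ω, ENNReal.ofReal (G ω) ∂P := by
      intro k θ' G hG
      rw [hfreeze k θ' G hG]
      have hpt : ∀ ω, ENNReal.ofReal (G ω * Real.exp (θ' ^ 2 * ‖vf (Y N k ω)‖ ^ 2 * τ / 2))
          ≤ ENNReal.ofReal (Real.exp (θ' ^ 2 * L ^ 2 * τ / 2)) * ENNReal.ofReal (G ω) := by
        intro ω
        rw [tame_ofReal_mul_right _ _ (Real.exp_nonneg _), mul_comm]
        refine mul_le_mul' (ENNReal.ofReal_le_ofReal (Real.exp_le_exp.mpr ?_)) le_rfl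
        have hb : ‖vf (Y N k ω)‖ ^ 2 ≤ L ^ 2 :=
          pow_le_pow_left₀ (norm_nonneg _) (hvf_norm _) 2
        have hτ0 : (0:ℝ) ≤ (τ:ℝ) := τ.2
        have hkey := mul_le_mul_of_nonneg_right
          (mul_le_mul_of_nonneg_left hb (sq_nonneg θ')) (by positivity : (0:ℝ) ≤ (τ:ℝ)/2)
        nlinarith [hkey]
      calc ∫⁻ ω, ENNReal.ofReal (G ω * Real.exp (θ' ^ 2 * ‖vf (Y N k ω)‖ ^ 2 * τ / 2)) ∂P
          ≤ ∫⁻ ω, ENNReal.ofReal (Real.exp (θ' ^ 2 * L ^ 2 * τ / 2))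
              * ENNReal.ofReal (G ω) ∂P := lintegral_mono hpt
        _ = ENNReal.ofReal (Real.exp (θ' ^ 2 * L ^ 2 * τ / 2))
              * ∫⁻ ω, ENNReal.ofReal (G ω) ∂P :=
            lintegral_const_mul _ ((hG.mono (hℱle N k) le_rfl).ennreal_ofReal)
    -- one-step lower bound
    have hfree_lb : ∀ (k : ℕ) (θ' : ℝ) (G : Ω → ℝ), Measurable[ℱ N k] G → (∀ ω, 0 ≤ G ω) →
        ∫⁻ ω, ENNReal.ofReal (G ω) ∂P
          ≤ ∫⁻ ω, ENNReal.ofReal (G ω * Real.exp (θ' * α N k ω)) ∂P := by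
      intro k θ' G hG hGpos
      rw [hfreeze k θ' G hG]
      apply lintegral_mono
      intro ω
      apply ENNReal.ofReal_le_ofReal
      apply le_mul_of_one_le_right (hGpos ω)
      apply Real.one_le_exp
      have hτ0 : (0:ℝ) ≤ (τ:ℝ) := τ.2
      positivity
    -- exponential moment bound
    have hmom : ∀ (θ' : ℝ) (n : ℕ),
        ∫⁻ ω, ENNReal.ofReal (Real.exp (θ' * S n ω)) ∂P
          ≤ ENNReal.ofReal (Real.exp (n * (θ' ^ 2 * L ^ 2 * τ / 2))) := by
      intro θ' n
      induction n with
      | zero =>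
        have h0 : ∀ ω, Real.exp (θ' * S 0 ω) = 1 := fun ω => by
          rw [hSapp 0 ω, Finset.range_zero, Finset.sum_empty, mul_zero, Real.exp_zero]
        simp_rw [h0]
        rw [ENNReal.ofReal_one, lintegral_one, measure_univ, Nat.cast_zero, zero_mul,
          Real.exp_zero, ENNReal.ofReal_one]
      | succ n ihn =>
        have hsplit : ∀ ω, Real.exp (θ' * S (n+1) ω)
            = Real.exp (θ' * S n ω) * Real.exp (θ' * α N n ω) := by
          intro ω
          rw [← Real.exp_add, hSapp, hSapp, Finset.sum_range_succ]
          ring_nf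
        simp_rw [hsplit]
        have hGmeas : Measurable[ℱ N n] fun ω => Real.exp (θ' * S n ω) :=
          Real.measurable_exp.comp ((hS𝒢 n).const_mul θ')
        calc ∫⁻ ω, ENNReal.ofReal (Real.exp (θ' * S n ω) * Real.exp (θ' * α N n ω)) ∂P
            ≤ ENNReal.ofReal (Real.exp (θ' ^ 2 * L ^ 2 * τ / 2))
              * ∫⁻ ω, ENNReal.ofReal (Real.exp (θ' * S n ω)) ∂P := hfree_ub n θ' _ hGmeas
          _ ≤ ENNReal.ofReal (Real.exp (θ' ^ 2 * L ^ 2 * τ / 2))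
              * ENNReal.ofReal (Real.exp (n * (θ' ^ 2 * L ^ 2 * τ / 2))) :=
            mul_le_mul_right ihn _
          _ = ENNReal.ofReal (Real.exp ((n+1 : ℕ) * (θ' ^ 2 * L ^ 2 * τ / 2))) := by
            rw [← ENNReal.ofReal_mul (Real.exp_nonneg _), ← Real.exp_add]
            congr 2
            push_cast
            ring
    -- main quantities
    set I : ℝ≥0∞ := ∫⁻ ω, ENNReal.ofReal (M N ω ^ 2) ∂P with hIdef
    set K : ℝ≥0∞ := ∫⁻ ω, ENNReal.ofReal (x N ω ^ 2) ∂P with hKdef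
    have hxsq : ∀ n ω, x n ω ^ 2 = Real.exp ((2*θ) * S n ω) := by
      intro n ω
      rw [hxapp, sq, ← Real.exp_add]
      congr 1
      ring
    have hKbound : K ≤ ENNReal.ofReal (Real.exp ((N:ℝ) * ((2*θ) ^ 2 * L ^ 2 * τ / 2))) := by
      rw [hKdef]
      simp_rw [hxsq]
      exact_mod_cast hmom (2*θ) N
    -- I is finite
    have hIfin : I ≠ ⊤ := by
      have hle : I ≤ ∑ n ∈ Finset.range (N+1), ∫⁻ ω, ENNReal.ofReal (x n ω ^ 2) ∂P := by
        rw [hIdef, ← lintegral_finset_sum _ (fun n _ => ((hxg n).pow_const 2).ennreal_ofReal)]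
        apply lintegral_mono
        intro ω
        obtain ⟨j, hj, hjeq⟩ := Finset.exists_mem_eq_sup'
          (Finset.nonempty_range_add_one (n := N)) (fun j => x j ω)
        have h1 : M N ω ^ 2 ≤ ∑ n ∈ Finset.range (N+1), x n ω ^ 2 := by
          rw [hMapp, hjeq]
          exact Finset.single_le_sum (f := fun n => x n ω ^ 2)
            (fun k _ => sq_nonneg (x k ω)) hj
        calc ENNReal.ofReal (M N ω ^ 2)
            ≤ ENNReal.ofReal (∑ n ∈ Finset.range (N+1), x n ω ^ 2) :=
              ENNReal.ofReal_le_ofReal h1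
          _ = ∑ n ∈ Finset.range (N+1), ENNReal.ofReal (x n ω ^ 2) :=
              ENNReal.ofReal_sum_of_nonneg (fun n _ => sq_nonneg _)
      refine ne_top_of_le_ne_top ?_ hle
      refine (ENNReal.sum_lt_top.mpr (fun n _ => ?_)).ne
      calc ∫⁻ ω, ENNReal.ofReal (x n ω ^ 2) ∂P
          ≤ ENNReal.ofReal (Real.exp (n * ((2*θ) ^ 2 * L ^ 2 * τ / 2))) := by
            simp_rw [hxsq]; exact hmom (2*θ) n
        _ < ⊤ := ENNReal.ofReal_lt_top
    -- step identity for x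
    have hxstep : ∀ k ω, x (k+1) ω = x k ω * Real.exp (θ * α N k ω) := by
      intro k ω
      rw [hxapp, hxapp, ← Real.exp_add, hSapp, hSapp, Finset.sum_range_succ]
      ring_nf
    set A : ℕ → ℝ≥0∞ := fun k => ∫⁻ ω, ENNReal.ofReal (M k ω * x k ω) ∂P with hAdef
    set B : ℕ → ℝ≥0∞ := fun k => ∫⁻ ω, ENNReal.ofReal (M k ω * x (k+1) ω) ∂P with hBdef
    have hBalt : ∀ k, B k
        = ∫⁻ ω, ENNReal.ofReal ((M k ω * x k ω) * Real.exp (θ * α N k ω)) ∂P := by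
      intro k
      rw [hBdef]
      apply lintegral_congr
      intro ω
      rw [hxstep k ω, mul_assoc]
    have hMx𝒢 : ∀ k, Measurable[ℱ N k] fun ω => M k ω * x k ω := fun k =>
      (hM𝒢 k).mul (hx𝒢 k)
    have hAB : ∀ k, A k ≤ B k := by
      intro k
      rw [hBalt k, hAdef]
      exact hfree_lb k θ _ (hMx𝒢 k) (fun ω => mul_nonneg (hMpos k ω).le (hxpos k ω).le)
    have hAleI : ∀ k, k ≤ N → A k ≤ I := by
      intro k hk
      rw [hAdef, hIdef]
      apply lintegral_mono
      intro ω
      apply ENNReal.ofReal_le_ofReal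
      calc M k ω * x k ω ≤ M N ω * M N ω :=
            mul_le_mul (hMmono k N hk ω) ((hxleM k ω).trans (hMmono k N hk ω))
              (hxpos k ω).le (hMpos N ω).le
        _ = M N ω ^ 2 := (sq (M N ω)).symm
    have hBfin : ∀ k, k ≤ N → B k ≠ ⊤ := by
      intro k hk
      have h1 : B k ≤ ENNReal.ofReal (Real.exp (θ ^ 2 * L ^ 2 * τ / 2)) * A k := by
        rw [hBalt k, hAdef]
        exact hfree_ub k θ _ (hMx𝒢 k)
      refine ne_top_of_le_ne_top ?_ (h1.trans (mul_le_mul_right (hAleI k hk) _))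
      exact ENNReal.mul_ne_top ENNReal.ofReal_ne_top hIfin
    -- pathwise inequality, integrated
    have hQ : ∀ ω, 2 * (M N ω ^ 2) + 0 * (M N ω ^ 2) + ∑ k ∈ Finset.range N,
          4 * (M k ω * x (k+1) ω)
        ≤ 1 * (M N ω ^ 2) + 4 * (x N ω ^ 2) + ∑ k ∈ Finset.range N,
          4 * (M k ω * x k ω) := by
      intro ω
      have h1 := tame_pathwise (fun n => x n ω) (fun n => (hxpos n ω).le) N
      have h2 : M N ω * x N ω ≤ (M N ω) ^ 2 / 4 + (x N ω) ^ 2 := by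
        nlinarith [sq_nonneg (M N ω / 2 - x N ω)]
      have e1 : ∑ k ∈ Finset.range N, 4 * (M k ω * x (k+1) ω)
          = 4 * ∑ k ∈ Finset.range N, (M k ω * x (k+1) ω) := by rw [Finset.mul_sum]
      have e2 : ∑ k ∈ Finset.range N, 4 * (M k ω * x k ω)
          = 4 * ∑ k ∈ Finset.range N, (M k ω * x k ω) := by rw [Finset.mul_sum]
      rw [e1, e2]
      have hMS : ∀ n, M n ω = (Finset.range (n+1)).sup' Finset.nonempty_range_add_one
          (fun j => x j ω) := fun n => hMapp n ω
      simp only [hMS] at *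
      linarith [h1, h2]
    have hmainL : ∫⁻ ω, ENNReal.ofReal (2 * (M N ω ^ 2) + 0 * (M N ω ^ 2)
          + ∑ k ∈ Finset.range N, 4 * (M k ω * x (k+1) ω)) ∂P
        = ENNReal.ofReal 2 * I + ENNReal.ofReal 0 * I
          + ∑ k ∈ Finset.range N, ENNReal.ofReal 4 * B k := by
      exact tame_split P 2 0 (by norm_num) le_rfl (fun ω => M N ω ^ 2) (fun ω => M N ω ^ 2)
        ((hMg N).pow_const 2) ((hMg N).pow_const 2)
        (fun ω => sq_nonneg _) (fun ω => sq_nonneg _) (Finset.range N)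
        (fun k ω => M k ω * x (k+1) ω)
        (fun k => (hMg k).mul (hxg (k+1)))
        (fun k ω => mul_nonneg (hMpos k ω).le (hxpos (k+1) ω).le)
    have hmainR : ∫⁻ ω, ENNReal.ofReal (1 * (M N ω ^ 2) + 4 * (x N ω ^ 2)
          + ∑ k ∈ Finset.range N, 4 * (M k ω * x k ω)) ∂P
        = ENNReal.ofReal 1 * I + ENNReal.ofReal 4 * K
          + ∑ k ∈ Finset.range N, ENNReal.ofReal 4 * A k := by
      exact tame_split P 1 4 (by norm_num) (by norm_num) (fun ω => M N ω ^ 2)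
        (fun ω => x N ω ^ 2) ((hMg N).pow_const 2) ((hxg N).pow_const 2)
        (fun ω => sq_nonneg _) (fun ω => sq_nonneg _) (Finset.range N)
        (fun k ω => M k ω * x k ω)
        (fun k => (hMg k).mul (hxg k))
        (fun k ω => mul_nonneg (hMpos k ω).le (hxpos k ω).le)
    have hmain : 2 * I + ∑ k ∈ Finset.range N, 4 * B k
        ≤ I + 4 * K + ∑ k ∈ Finset.range N, 4 * B k := by
      have h1 : ∫⁻ ω, ENNReal.ofReal (2 * (M N ω ^ 2) + 0 * (M N ω ^ 2)
            + ∑ k ∈ Finset.range N, 4 * (M k ω * x (k+1) ω)) ∂P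
          ≤ ∫⁻ ω, ENNReal.ofReal (1 * (M N ω ^ 2) + 4 * (x N ω ^ 2)
            + ∑ k ∈ Finset.range N, 4 * (M k ω * x k ω)) ∂P :=
        lintegral_mono fun ω => ENNReal.ofReal_le_ofReal (hQ ω)
      rw [hmainL, hmainR] at h1
      simp only [ENNReal.ofReal_one, ENNReal.ofReal_zero, one_mul, zero_mul, add_zero,
        ENNReal.ofReal_ofNat] at h1
      have h2 : ∑ k ∈ Finset.range N, (4:ℝ≥0∞) * A k
          ≤ ∑ k ∈ Finset.range N, (4:ℝ≥0∞) * B k :=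
        Finset.sum_le_sum fun k _ => mul_le_mul_right (hAB k) _
      calc 2 * I + ∑ k ∈ Finset.range N, (4:ℝ≥0∞) * B k
          ≤ I + 4 * K + ∑ k ∈ Finset.range N, (4:ℝ≥0∞) * A k := h1
        _ ≤ I + 4 * K + ∑ k ∈ Finset.range N, (4:ℝ≥0∞) * B k := by
            exact add_le_add_right h2 _
    have hSBfin : (∑ k ∈ Finset.range N, (4:ℝ≥0∞) * B k) ≠ ⊤ := by
      refine (ENNReal.sum_lt_top.mpr (fun k hk => ?_)).ne
      refine ENNReal.mul_lt_top (by norm_num) ?_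
      exact lt_top_iff_ne_top.mpr (hBfin k (le_of_lt (Finset.mem_range.mp hk)))
    have hIK : I ≤ 4 * K := by
      have h1 : 2 * I ≤ I + 4 * K :=
        (ENNReal.add_le_add_iff_right hSBfin).mp hmain
      rw [two_mul] at h1
      exact (ENNReal.add_le_add_iff_left hIfin).mp h1
    -- identify the exponent
    have hθN : (N:ℝ) * ((2*θ) ^ 2 * L ^ 2 * τ / 2) = p ^ 2 * L ^ 2 * T / 2 := by
      have h2θ : 2*θ = p*z := by rw [hθdef]; ring
      rw [h2θ, mul_pow, hz2, mul_one, hτ]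
      field_simp
    have hIK4 : I ≤ ENNReal.ofReal (4 * Real.exp (p ^ 2 * L ^ 2 * T / 2)) := by
      calc I ≤ 4 * K := hIK
        _ ≤ 4 * ENNReal.ofReal (Real.exp (p ^ 2 * L ^ 2 * T / 2)) := by
            refine mul_le_mul_right ?_ _
            rw [← hθN]
            exact hKbound
        _ = ENNReal.ofReal (4 * Real.exp (p ^ 2 * L ^ 2 * T / 2)) := by
            rw [ENNReal.ofReal_mul (by norm_num : (0:ℝ) ≤ 4), ENNReal.ofReal_ofNat]
    -- back to the Bochner integral
    have hFeq : ∀ ω, ((Finset.range (N+1)).sup' Finset.nonempty_range_add_one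
        (fun n => Real.exp (p * z * ∑ k ∈ Finset.range n, α N k ω))) = M N ω ^ 2 := by
      intro ω
      have h1 : ∀ n ∈ Finset.range (N+1),
          Real.exp (p * z * ∑ k ∈ Finset.range n, α N k ω) = x n ω ^ 2 := by
        intro n _
        rw [hxsq, hSapp]
        congr 1
        rw [hθdef]
        ring
      rw [Finset.sup'_congr Finset.nonempty_range_add_one rfl h1, hMapp]
      exact tame_sup'_sq Finset.nonempty_range_add_one (fun n => x n ω)
        (fun n _ => (hxpos n ω).le)
    have hFmeas : Measurable fun ω => ((Finset.range (N+1)).sup' Finset.nonempty_range_add_one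
        (fun n => Real.exp (p * z * ∑ k ∈ Finset.range n, α N k ω))) := by
      apply Finset.measurable_range_sup''
      intro n _
      exact Real.measurable_exp.comp ((Finset.measurable_sum _ fun k _ => hαg k).const_mul _)
    have hInt : ∫ ω, ((Finset.range (N+1)).sup' Finset.nonempty_range_add_one
        (fun n => Real.exp (p * z * ∑ k ∈ Finset.range n, α N k ω))) ∂P = I.toReal := by
      rw [integral_eq_lintegral_of_nonneg_ae (ae_of_all _ fun ω => (hFeq ω) ▸ sq_nonneg _)
        hFmeas.aestronglyMeasurable]
      congr 1
      rw [hIdef]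
      apply lintegral_congr
      intro ω
      rw [hFeq ω]
    rw [hInt]
    exact ENNReal.toReal_le_of_le_ofReal (by positivity) hIK4

  constructor
  · exact ⟨4 * Real.exp (p ^ 2 * L ^ 2 * T / 2), key⟩
  · intro hp2 z hz N hN
    refine (key z hz N hN).trans ?_
    have h4 : (4:ℝ) ≤ 2 ^ p := by
      have : (2:ℝ) ^ (2:ℝ) ≤ 2 ^ p := Real.rpow_le_rpow_left_iff (by norm_num) |>.mpr hp2
      rw [show (2:ℝ) ^ (2:ℝ) = 4 by
        rw [show (2:ℝ) = ((2:ℕ):ℝ) by norm_num, Real.rpow_natCast]; norm_num] at this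
      exact this
    have hexp : Real.exp (p ^ 2 * L ^ 2 * T / 2) ≤ Real.exp (4 * p ^ 3 * T * L ^ 2) := by
      apply Real.exp_le_exp.mpr
      have hTL : 0 ≤ T * L ^ 2 := mul_nonneg hT.le (sq_nonneg _)
      have hprod : 0 ≤ T * L ^ 2 * (p ^ 2 * (4 * p - 1 / 2)) :=
        mul_nonneg hTL (mul_nonneg (sq_nonneg p) (by linarith))
      nlinarith [hprod]
    calc (4:ℝ) * Real.exp (p ^ 2 * L ^ 2 * T / 2)
        ≤ 2 ^ p * Real.exp (4 * p ^ 3 * T * L ^ 2) :=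
          mul_le_mul h4 hexp (Real.exp_nonneg _) (by positivity)
      _ = 2 ^ p * Real.exp (4 * p ^ 3 * T * (c + ‖σ 0‖) ^ 2) := by rw [hLdef]
end
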